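/- arXiv:1612.07041 — 2 statements merged into one kernel-verified Lean document; each statement's English description precedes it below -/
import Mathlib

section
/- Fix integers p ≥ 1 and k ≥ 1, a set L, and a labeling u : {1,…,p} → L. Let NC(W^k) be the set of noncrossing partitions π of {1,…,2pk} such that (i) for every s ∈ {1,…,2pk}, either σ_π(s) ≡ s+1 (mod 2p) or σ_π(s) ≡ 1−s (mod 2p), and (ii) every block of π is constant for the label map λ, where λ(s) = u(ι(s)), ι(s) = ρ(s) if ρ(s) ≤ p and ι(s) = 2p+1−ρ(s) otherwise, and ρ(s) ∈ {1,…,2p} is the residue of s modulo 2p. Let NC²(W̃^k) be the set of noncrossing perfect matchings σ of {1,…,4pk} such that every pair {a,b} ∈ σ satisfies λ̃(a) = λ̃(b) and at least one of: (1) a+b ≡ 1 (mod 4p); (2) {ρ̃(a), ρ̃(b)} = {2i, 2i+1} for some 1 ≤ i ≤ p−1; (3) {ρ̃(a), ρ̃(b)} = {4p−2i, 4p+1−2i} for some 1 ≤ i ≤ p−1; here ρ̃(t) ∈ {1,…,4p} is the residue of t modulo 4p, ι̃(t) = ρ̃(t) if ρ̃(t) ≤ 2p and ι̃(t) = 4p+1−ρ̃(t)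 otherwise, and λ̃(t) = u(⌈ι̃(t)/2⌉). Then the map π ↦ α(π) = { {2s, 2σ_π(s) − 1} : s ∈ {1,…,2pk} } is a bijection from NC(W^k) onto NC²(W̃^k). -/
open Finset
open scoped Classical

/-- `P` is a set partition of `{1,…,n}` (modelled on `Fin n`): a collection of nonempty
blocks such that every element belongs to exactly one block. -/
def IsPartitionOf (n : ℕ) (P : Finset (Finset (Fin n))) : Prop :=
  (∀ B ∈ P, B.Nonempty) ∧ ∀ s : Fin n, ∃! B, B ∈ P ∧ s ∈ B

/-- `a` and `b` lie in a common block of `P`. -/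
def SameBlock {n : ℕ} (P : Finset (Finset (Fin n))) (a b : Fin n) : Prop :=
  ∃ B ∈ P, a ∈ B ∧ b ∈ B

/-- A partition is noncrossing if there are no `a < b < c < d` with `a, c` in one block
and `b, d` in another, distinct block. -/
def IsNoncrossing {n : ℕ} (P : Finset (Finset (Fin n))) : Prop :=
  ∀ a b c d : Fin n, a < b → b < c → c < d →
    SameBlock P a c → SameBlock P b d → SameBlock P a b

/-- A perfect matching (pair partition): a partition all of whose blocks have two elements. -/
def IsPairPartition (n : ℕ) (P : Finset (Finset (Fin n))) : Prop :=
  IsPartitionOf n P ∧ ∀ B ∈ P, B.card = 2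

/-- The block of `P` containing `s`. -/
noncomputable def theBlock {n : ℕ} (P : Finset (Finset (Fin n))) (s : Fin n) :
    Finset (Fin n) :=
  univ.filter (fun t => SameBlock P s t)

/-- The cycle permutation `σ_π` of a partition: on a block `{s₁ < s₂ < … < s_m}` it sends
`s_i` to `s_{i+1}` for `i < m` and sends `s_m` back to `s₁`. -/
noncomputable def cyclePerm {n : ℕ} (P : Finset (Finset (Fin n))) (s : Fin n) : Fin n :=
  if h : ((theBlock P s).filter (fun t => s < t)).Nonempty then
    ((theBlock P s).filter (fun t => s < t)).min' h
  else if h' : (theBlock P s).Nonempty then (theBlock P s).min' h' else s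

/-- The 1-based value of `s : Fin n`, i.e. the corresponding element of `{1,…,n}`. -/
def val1 {n : ℕ} (s : Fin n) : ℕ := s.val + 1

/-- The residue in `{1,…,m}` of the (1-based) element corresponding to `s : Fin n`. -/
def res {n : ℕ} (s : Fin n) (m : ℕ) : ℕ := s.val % m + 1

/-- The map `α`, sending a partition `π` of `{1,…,n}` to the collection of pairs
`{2s, 2σ_π(s) − 1}`, `s ∈ {1,…,n}` (in 0-based indexing, `2s ↦ 2s+1` and
`2σ_π(s)−1 ↦ 2⬝(σ_π(s))`). -/
noncomputable def alphaMap {n : ℕ} (P : Finset (Finset (Fin n))) :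
    Finset (Finset (Fin (2*n))) :=
  (univ : Finset (Fin n)).image fun s =>
    ({⟨2 * s.val + 1, by have := s.isLt; omega⟩,
      ⟨2 * (cyclePerm P s).val, by have := (cyclePerm P s).isLt; omega⟩} :
      Finset (Fin (2*n)))

/-- Substitution `Σ_{i≥0} t_i g^i` of a power series with zero constant term into the
series with coefficient sequence `t`; the `m`-th coefficient only involves `i ≤ m`. -/
noncomputable def substSeries (t : ℕ → ℝ) (g : PowerSeries ℝ) : PowerSeries ℝ :=
  PowerSeries.mk fun m =>
    ∑ i ∈ Finset.range (m+1), t i * (PowerSeries.coeff (R := ℝ) m) (g ^ i)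

/-- The even part `Σ a_{2n} z^{2n}` of a formal power series `Σ a_n z^n`. -/
noncomputable def evenPart (f : PowerSeries ℝ) : PowerSeries ℝ :=
  PowerSeries.mk fun n => if Even n then PowerSeries.coeff (R := ℝ) n f else 0

/-- The label of a position of `{1,…,2pk}`: the residue `ρ(s) ∈ {1,…,2p}` is turned into
the letter index `ι(s) = ρ(s)` if `ρ(s) ≤ p` and `ι(s) = 2p+1−ρ(s)` otherwise, and the
label is `u(ι(s))`. -/
def lab {L : Type*} (p : ℕ) (u : ℕ → L) {n : ℕ} (s : Fin n) : L :=
  u (if res s (2*p) ≤ p then res s (2*p) else 2*p + 1 - res s (2*p))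

/-- The label of a position of `{1,…,4pk}`: the residue `ρ̃(t) ∈ {1,…,4p}` gives
`ι̃(t) = ρ̃(t)` if `ρ̃(t) ≤ 2p`, `ι̃(t) = 4p+1−ρ̃(t)` otherwise, and the label is
`u(⌈ι̃(t)/2⌉)`. -/
def labTilde {L : Type*} (p : ℕ) (u : ℕ → L) {n : ℕ} (t : Fin n) : L :=
  u (((if res t (4*p) ≤ 2*p then res t (4*p) else 4*p + 1 - res t (4*p)) + 1) / 2)

section Basics
variable {n : ℕ} {P : Finset (Finset (Fin n))}

lemma mem_theBlock {s t : Fin n} : t ∈ theBlock P s ↔ SameBlock P s t := by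
  simp [theBlock]

lemma block_unique (hP : IsPartitionOf n P) {B B' : Finset (Fin n)} {a : Fin n}
    (hB : B ∈ P) (ha : a ∈ B) (hB' : B' ∈ P) (ha' : a ∈ B') : B = B' := by
  obtain ⟨C, _, hu⟩ := hP.2 a
  rw [hu B ⟨hB, ha⟩, hu B' ⟨hB', ha'⟩]

lemma theBlock_eq (hP : IsPartitionOf n P) {B : Finset (Fin n)} {a : Fin n}
    (hB : B ∈ P) (ha : a ∈ B) : theBlock P a = B := by
  ext t
  rw [mem_theBlock]
  constructor
  · rintro ⟨C, hC, haC, htC⟩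
    rwa [block_unique hP hC haC hB ha] at htC
  · intro ht; exact ⟨B, hB, ha, ht⟩

lemma theBlock_mem (hP : IsPartitionOf n P) (s : Fin n) : theBlock P s ∈ P := by
  obtain ⟨B, ⟨hB, hs⟩, _⟩ := hP.2 s
  rw [theBlock_eq hP hB hs]; exact hB

lemma mem_theBlock_self (hP : IsPartitionOf n P) (s : Fin n) : s ∈ theBlock P s := by
  obtain ⟨B, ⟨hB, hs⟩, _⟩ := hP.2 s
  rw [theBlock_eq hP hB hs]; exact hs

lemma theBlock_eq_of_mem (hP : IsPartitionOf n P) {s t : Fin n}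
    (ht : t ∈ theBlock P s) : theBlock P t = theBlock P s :=
  theBlock_eq hP (theBlock_mem hP s) ht

lemma sameBlock_iff (hP : IsPartitionOf n P) {s t : Fin n} :
    SameBlock P s t ↔ t ∈ theBlock P s := mem_theBlock.symm

lemma sameBlock_of_both (hP : IsPartitionOf n P) {s a b : Fin n}
    (ha : a ∈ theBlock P s) (hb : b ∈ theBlock P s) : SameBlock P a b :=
  ⟨theBlock P s, theBlock_mem hP s, ha, hb⟩

/-- `cyclePerm P s` belongs to the block of `s`. -/
lemma cyclePerm_mem (hP : IsPartitionOf n P) (s : Fin n) :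
    cyclePerm P s ∈ theBlock P s := by
  unfold cyclePerm
  split_ifs with h h'
  · exact (Finset.mem_filter.mp (Finset.min'_mem _ h)).1
  · exact Finset.min'_mem _ h'
  · exact mem_theBlock_self hP s

lemma theBlock_cyclePerm (hP : IsPartitionOf n P) (s : Fin n) :
    theBlock P (cyclePerm P s) = theBlock P s :=
  theBlock_eq_of_mem hP (cyclePerm_mem hP s)

/-- If the block of `s` has an element above `s`, then `cyclePerm P s` is the least such. -/
lemma cyclePerm_of_gt (hP : IsPartitionOf n P) {s t : Fin n}
    (ht : t ∈ theBlock P s) (hst : s < t) :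
    s < cyclePerm P s ∧ ∀ w ∈ theBlock P s, s < w → cyclePerm P s ≤ w := by
  have h : ((theBlock P s).filter (fun t => s < t)).Nonempty :=
    ⟨t, Finset.mem_filter.mpr ⟨ht, hst⟩⟩
  unfold cyclePerm
  rw [dif_pos h]
  constructor
  · exact (Finset.mem_filter.mp (Finset.min'_mem _ h)).2
  · intro w hw hsw
    exact Finset.min'_le _ _ (Finset.mem_filter.mpr ⟨hw, hsw⟩)

/-- If the block of `s` has no element above `s`, then `cyclePerm P s` is the block min. -/
lemma cyclePerm_of_wrap (hP : IsPartitionOf n P) {s : Fin n}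
    (h : ∀ w ∈ theBlock P s, w ≤ s) :
    cyclePerm P s ≤ s ∧ ∀ w ∈ theBlock P s, cyclePerm P s ≤ w := by
  have h0 : ¬ ((theBlock P s).filter (fun t => s < t)).Nonempty := by
    rintro ⟨t, htm⟩
    rcases Finset.mem_filter.mp htm with ⟨ht, hst⟩
    exact absurd (h t ht) (not_le.mpr hst)
  have h' : (theBlock P s).Nonempty := ⟨s, mem_theBlock_self hP s⟩
  unfold cyclePerm
  rw [dif_neg h0, dif_pos h']
  exact ⟨h _ (Finset.min'_mem _ h'), fun w hw => Finset.min'_le _ _ hw⟩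

/-- Dichotomy for `cyclePerm`. -/
lemma cyclePerm_cases (hP : IsPartitionOf n P) (s : Fin n) :
    (s < cyclePerm P s ∧ (∀ w ∈ theBlock P s, ¬ (s < w ∧ w < cyclePerm P s))) ∨
    (cyclePerm P s ≤ s ∧ (∀ w ∈ theBlock P s, w ≤ s) ∧
      ∀ w ∈ theBlock P s, cyclePerm P s ≤ w) := by
  by_cases h : ∃ t ∈ theBlock P s, s < t
  · obtain ⟨t, ht, hst⟩ := h
    obtain ⟨h1, h2⟩ := cyclePerm_of_gt hP ht hst
    refine Or.inl ⟨h1, fun w hw ⟨hsw, hws⟩ => absurd (h2 w hw hsw) (not_le.mpr hws)⟩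
  · push_neg at h
    obtain ⟨h1, h2⟩ := cyclePerm_of_wrap hP h
    exact Or.inr ⟨h1, h, h2⟩

lemma cyclePerm_injective (hP : IsPartitionOf n P) :
    Function.Injective (cyclePerm P) := by
  intro a b hab
  by_contra hne
  wlog hlt : a < b generalizing a b
  · exact this hab.symm (Ne.symm hne) (lt_of_le_of_ne (not_lt.mp hlt) (Ne.symm hne))
  set c := cyclePerm P a with hc
  have hcb : cyclePerm P b = c := hab.symm
  have hBa : theBlock P a = theBlock P c := (theBlock_cyclePerm hP a).symm
  have hBb : theBlock P b = theBlock P c := by rw [← hcb]; exact (theBlock_cyclePerm hP b).symm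
  have hbBa : b ∈ theBlock P a := by
    rw [hBa, ← hBb]; exact mem_theBlock_self hP b
  rcases cyclePerm_cases hP a with ⟨h1, h2⟩ | ⟨h1, h2, h3⟩
  · -- a < c, nothing in block of a strictly between a and c
    have hbc : ¬(a < b ∧ b < c) := h2 b hbBa
    have hbge : c ≤ b := by
      rcases lt_or_ge b c with h | h
      · exact absurd ⟨hlt, h⟩ hbc
      · exact h
    -- so c ≤ b; but cyclePerm b = c ≤ b means block of b has no element > b;
    -- yet is c < b or c = b?
    rcases eq_or_lt_of_le hbge with he | hclt
    · -- c = b : then a < b = c = cyclePerm b, but cyclePerm b = c = b means b fixed?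
      -- cyclePerm b = c = b. Then from cases for b: either b < cyclePerm b (false) or
      -- all elements of block b are ≤ b. But a ∈ block b? a ∈ block a = block c = block b.
      -- and cyclePerm b = c = b, so block b has no elt > b and b is min of block b?
      -- a ∈ block b with a < b contradicts b = min.
      rcases cyclePerm_cases hP b with ⟨k1, _⟩ | ⟨k1, k2, k3⟩
      · rw [hcb, he] at k1; exact lt_irrefl b k1
      · have haB : a ∈ theBlock P b := by
          rw [hBb, ← hBa]; exact mem_theBlock_self hP a
        have h5 := k3 a haB
        rw [hcb] at h5
        exact absurd hlt (not_lt.mpr (he ▸ h5))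
    · -- c < b, cyclePerm b = c < b ⇒ block b has no elements > b... need that:
      rcases cyclePerm_cases hP b with ⟨k1, _⟩ | ⟨k1, k2, k3⟩
      · rw [hcb] at k1; exact absurd hclt (not_lt.mpr (le_of_lt k1))
      · -- block b ∋ no elements > b; but need contradiction: a < c < b, c = cyclePerm a = 
        -- min elts of block a greater than a... a < c means there were elements > a; 
        -- b ∈ block a with a < b and b... min' ≤ b gives c ≤ b fine. Contradiction:
        -- c = min of block b (k3) and no elts > b. a ∈ block b, a < b: k3 a: c ≤ a?? 
        have haB : a ∈ theBlock P b := by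
          rw [hBb, ← hBa]; exact mem_theBlock_self hP a
        have h5 := k3 a haB
        rw [hcb] at h5
        rw [← hc] at h1
        exact absurd (lt_of_le_of_lt h5 h1) (lt_irrefl c)
  · -- cyclePerm a = c ≤ a, block a has no elements > a; but b ∈ block a, b > a
    exact absurd (h2 b hbBa) (not_le.mpr hlt)

end Basics
section Orbits
variable {n : ℕ}

/-- `t` is a forward iterate of `s` under `f`. -/
def OrbRel (f : Fin n → Fin n) (s t : Fin n) : Prop := ∃ j : ℕ, f^[j] s = t

lemma OrbRel.refl (f : Fin n → Fin n) (s : Fin n) : OrbRel f s s := ⟨0, rfl⟩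

lemma OrbRel.step (f : Fin n → Fin n) (s : Fin n) : OrbRel f s (f s) := ⟨1, rfl⟩

lemma OrbRel.trans {f : Fin n → Fin n} {s t w : Fin n}
    (h1 : OrbRel f s t) (h2 : OrbRel f t w) : OrbRel f s w := by
  obtain ⟨j1, rfl⟩ := h1; obtain ⟨j2, rfl⟩ := h2
  exact ⟨j2 + j1, (Function.iterate_add_apply f j2 j1 s)⟩

lemma exists_period {f : Fin n → Fin n} (hf : Function.Injective f) (s : Fin n) :
    ∃ m : ℕ, 0 < m ∧ f^[m] s = s := by
  obtain ⟨a, b, hab, he⟩ := Finite.exists_ne_map_eq_of_infinite (fun j : ℕ => f^[j] s)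
  wlog hlt : a < b generalizing a b
  · exact this b a (Ne.symm hab) he.symm (lt_of_le_of_ne (not_lt.mp hlt) (Ne.symm hab))
  refine ⟨b - a, by omega, ?_⟩
  have : f^[a] (f^[b-a] s) = f^[a] s := by
    rw [← Function.iterate_add_apply]
    have : a + (b - a) = b := by omega
    rw [this]; exact he.symm
  exact (Function.Injective.iterate hf a) this

lemma iterate_period {f : Fin n → Fin n} {s : Fin n} {m : ℕ} (h : f^[m] s = s) :
    ∀ q : ℕ, f^[q * m] s = s := by
  intro q
  induction q with
  | zero => simp
  | succ q ih =>
    have : (q + 1) * m = m + q * m := by ring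
    rw [this, Function.iterate_add_apply, ih, h]

lemma OrbRel.symm {f : Fin n → Fin n} (hf : Function.Injective f) {s t : Fin n}
    (h : OrbRel f s t) : OrbRel f t s := by
  obtain ⟨j, rfl⟩ := h
  obtain ⟨m, hm, hper⟩ := exists_period hf s
  refine ⟨j * m - j, ?_⟩
  rw [← Function.iterate_add_apply]
  have hle : j ≤ j * m := Nat.le_mul_of_pos_right j hm
  have : j * m - j + j = j * m := by omega
  rw [this]
  exact iterate_period hper j

variable {P : Finset (Finset (Fin n))}

lemma orbRel_mem_block (hP : IsPartitionOf n P) {s t : Fin n}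
    (h : OrbRel (cyclePerm P) s t) : t ∈ theBlock P s := by
  obtain ⟨j, rfl⟩ := h
  induction j with
  | zero => exact mem_theBlock_self hP s
  | succ j ih =>
    rw [Function.iterate_succ_apply']
    have := cyclePerm_mem hP ((cyclePerm P)^[j] s)
    rwa [theBlock_eq_of_mem hP ih] at this

/-- From any point, the block minimum is reachable. -/
lemma orbRel_min (hP : IsPartitionOf n P) (s : Fin n)
    (hne : (theBlock P s).Nonempty) :
    OrbRel (cyclePerm P) s ((theBlock P s).min' hne) := by
  set B := theBlock P s with hB
  -- strong induction on card of elements above s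
  have key : ∀ N : ℕ, ∀ s : Fin n, ∀ hne : (theBlock P s).Nonempty,
      ((theBlock P s).filter (fun t => s < t)).card ≤ N →
      OrbRel (cyclePerm P) s ((theBlock P s).min' hne) := by
    intro N
    induction N with
    | zero =>
      intro s hne hcard
      have hemp : ∀ w ∈ theBlock P s, w ≤ s := by
        intro w hw
        by_contra hlt
        have : w ∈ (theBlock P s).filter (fun t => s < t) :=
          Finset.mem_filter.mpr ⟨hw, not_le.mp hlt⟩
        have := Finset.card_pos.mpr ⟨w, this⟩
        omega
      obtain ⟨h1, h2⟩ := cyclePerm_of_wrap hP hemp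
      have hmin : cyclePerm P s = (theBlock P s).min' hne := by
        apply le_antisymm
        · exact h2 _ (Finset.min'_mem _ _)
        · exact Finset.min'_le _ _ (cyclePerm_mem hP s)
      exact hmin ▸ OrbRel.step _ s
    | succ N ih =>
      intro s hne hcard
      by_cases hex : ∃ t ∈ theBlock P s, s < t
      · obtain ⟨t, ht, hst⟩ := hex
        obtain ⟨h1, h2⟩ := cyclePerm_of_gt hP ht hst
        set s' := cyclePerm P s with hs'
        have hBeq : theBlock P s' = theBlock P s := theBlock_cyclePerm hP s
        have hsub : (theBlock P s').filter (fun t => s' < t) ⊂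
            (theBlock P s).filter (fun t => s < t) := by
          rw [hBeq]
          refine Finset.ssubset_iff_of_subset ?_ |>.mpr ?_
          · intro w hw
            rcases Finset.mem_filter.mp hw with ⟨hw1, hw2⟩
            exact Finset.mem_filter.mpr ⟨hw1, lt_trans h1 hw2⟩
          · exact ⟨s', Finset.mem_filter.mpr ⟨cyclePerm_mem hP s, h1⟩,
              by simp⟩
        have hcard' : ((theBlock P s').filter (fun t => s' < t)).card ≤ N := by
          have := Finset.card_lt_card hsub
          omega
        have hne' : (theBlock P s').Nonempty := hBeq ▸ hne
        have horb := ih s' hne' hcard'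
        have hmeq : (theBlock P s').min' hne' = (theBlock P s).min' hne := by
          congr 1
        exact OrbRel.trans (OrbRel.step _ s) (hmeq ▸ horb)
      · push_neg at hex
        obtain ⟨h1, h2⟩ := cyclePerm_of_wrap hP hex
        have hmin : cyclePerm P s = (theBlock P s).min' hne := by
          apply le_antisymm
          · exact h2 _ (Finset.min'_mem _ _)
          · exact Finset.min'_le _ _ (cyclePerm_mem hP s)
        exact hmin ▸ OrbRel.step _ s
  exact key _ s hne le_rfl

/-- Every block element is reachable from the block minimum. -/
lemma orbRel_from_min (hP : IsPartitionOf n P) {s t : Fin n}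
    (hne : (theBlock P s).Nonempty) (ht : t ∈ theBlock P s) :
    OrbRel (cyclePerm P) ((theBlock P s).min' hne) t := by
  have key : ∀ N : ℕ, ∀ t ∈ theBlock P s, t.val ≤ N →
      OrbRel (cyclePerm P) ((theBlock P s).min' hne) t := by
    intro N
    induction N with
    | zero =>
      intro t ht hv
      have h0 : (theBlock P s).min' hne ≤ t := Finset.min'_le _ _ ht
      have he : (theBlock P s).min' hne = t := by
        apply Fin.ext
        have := Fin.le_def.mp h0
        omega
      exact he ▸ OrbRel.refl _ _
    | succ N ih =>
      intro t ht hv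
      by_cases hmin : (theBlock P s).min' hne = t
      · exact hmin ▸ OrbRel.refl _ _
      · have hmlt : (theBlock P s).min' hne < t :=
          lt_of_le_of_ne (Finset.min'_le _ _ ht) hmin
        have hfne : ((theBlock P s).filter (fun w => w < t)).Nonempty :=
          ⟨_, Finset.mem_filter.mpr ⟨Finset.min'_mem _ _, hmlt⟩⟩
        set t' := ((theBlock P s).filter (fun w => w < t)).max' hfne with ht'
        have ht'mem : t' ∈ theBlock P s :=
          (Finset.mem_filter.mp (Finset.max'_mem _ hfne)).1
        have ht'lt : t' < t := (Finset.mem_filter.mp (Finset.max'_mem _ hfne)).2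
        have hBeq : theBlock P t' = theBlock P s := theBlock_eq_of_mem hP ht'mem
        have htmem' : t ∈ theBlock P t' := hBeq ▸ ht
        obtain ⟨h1, h2⟩ := cyclePerm_of_gt hP htmem' ht'lt
        have hcp : cyclePerm P t' = t := by
          have hle : cyclePerm P t' ≤ t := h2 t htmem' ht'lt
          rcases eq_or_lt_of_le hle with he | hlt2
          · exact he
          · exfalso
            have hmem2 : cyclePerm P t' ∈ (theBlock P s).filter (fun w => w < t) :=
              Finset.mem_filter.mpr ⟨hBeq ▸ cyclePerm_mem hP t', hlt2⟩
            have := Finset.le_max' _ _ hmem2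
            exact absurd (lt_of_le_of_lt this h1) (lt_irrefl _)
        have ihl : OrbRel (cyclePerm P) ((theBlock P s).min' hne) t' := by
          apply ih t' ht'mem
          have : t'.val < t.val := ht'lt
          omega
        exact OrbRel.trans ihl (hcp ▸ OrbRel.step _ t')
  exact key t.val t ht le_rfl

end Orbits
section BlocksOrbits
variable {n : ℕ} {P P' : Finset (Finset (Fin n))}

lemma theBlock_eq_orb (hP : IsPartitionOf n P) (s : Fin n) :
    theBlock P s = Finset.univ.filter (fun t => OrbRel (cyclePerm P) s t) := by
  ext t
  simp only [Finset.mem_filter, Finset.mem_univ, true_and]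
  constructor
  · intro ht
    have hne : (theBlock P s).Nonempty := ⟨s, mem_theBlock_self hP s⟩
    exact OrbRel.trans (orbRel_min hP s hne) (orbRel_from_min hP hne ht)
  · exact orbRel_mem_block hP

lemma partition_eq_image (hP : IsPartitionOf n P) :
    P = Finset.univ.image (fun s => theBlock P s) := by
  ext B
  simp only [Finset.mem_image, Finset.mem_univ, true_and]
  constructor
  · intro hB
    obtain ⟨s, hs⟩ := hP.1 B hB
    exact ⟨s, theBlock_eq hP hB hs⟩
  · rintro ⟨s, rfl⟩
    exact theBlock_mem hP s

lemma partition_determined (hP : IsPartitionOf n P) (hP' : IsPartitionOf n P')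
    (h : cyclePerm P = cyclePerm P') : P = P' := by
  rw [partition_eq_image hP, partition_eq_image hP']
  congr 1
  funext s
  rw [theBlock_eq_orb hP, theBlock_eq_orb hP', h]

end BlocksOrbits
section PairStructure
variable {n : ℕ}

/-- The pair `{2s+1, 2t}` (0-based) in `Fin (2n)`. -/
def pairFor (s t : Fin n) : Finset (Fin (2*n)) :=
  {⟨2 * s.val + 1, by have := s.isLt; omega⟩, ⟨2 * t.val, by have := t.isLt; omega⟩}

lemma mem_pairFor {s t : Fin n} {z : Fin (2*n)} :
    z ∈ pairFor s t ↔ z.val = 2 * s.val + 1 ∨ z.val = 2 * t.val := by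
  simp only [pairFor, Finset.mem_insert, Finset.mem_singleton]
  constructor
  · rintro (rfl | rfl) <;> simp
  · rintro (h | h)
    · exact Or.inl (Fin.ext h)
    · exact Or.inr (Fin.ext h)

lemma pairFor_card (s t : Fin n) : (pairFor s t).card = 2 := by
  rw [pairFor, Finset.card_insert_of_notMem, Finset.card_singleton]
  simp only [Finset.mem_singleton]
  intro h
  have := congrArg Fin.val h
  simp at this
  omega

lemma alphaMap_def {P : Finset (Finset (Fin n))} :
    alphaMap P = Finset.univ.image (fun s => pairFor s (cyclePerm P s)) := rfl

lemma mem_alphaMap {P : Finset (Finset (Fin n))} {B : Finset (Fin (2*n))} :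
    B ∈ alphaMap P ↔ ∃ s, B = pairFor s (cyclePerm P s) := by
  rw [alphaMap_def]
  simp only [Finset.mem_image, Finset.mem_univ, true_and]
  exact ⟨fun ⟨s, h⟩ => ⟨s, h.symm⟩, fun ⟨s, h⟩ => ⟨s, h.symm⟩⟩

/-- `alphaMap P` is a pair partition, given that `P` is a partition. -/
lemma alphaMap_isPairPartition {P : Finset (Finset (Fin n))}
    (hP : IsPartitionOf n P) : IsPairPartition (2*n) (alphaMap P) := by
  have hinj := cyclePerm_injective hP
  have hsurj : Function.Surjective (cyclePerm P) :=
    Finite.surjective_of_injective hinj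
  constructor
  · constructor
    · rintro B hB
      obtain ⟨s, rfl⟩ := mem_alphaMap.mp hB
      exact ⟨_, Finset.mem_insert_self _ _⟩
    · intro z
      rcases Nat.even_or_odd z.val with he | ho
      · -- even : z = 2t, t = σ s for a unique s
        obtain ⟨t0, ht0⟩ := he
        have htlt : t0 < n := by have := z.isLt; omega
        obtain ⟨s, hs⟩ := hsurj ⟨t0, htlt⟩
        refine ⟨pairFor s (cyclePerm P s), ⟨mem_alphaMap.mpr ⟨s, rfl⟩, ?_⟩, ?_⟩
        · rw [mem_pairFor, hs]; right; simp; omega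
        · rintro B ⟨hB, hzB⟩
          obtain ⟨s', rfl⟩ := mem_alphaMap.mp hB
          rcases mem_pairFor.mp hzB with h | h
          · omega
          · have : cyclePerm P s' = cyclePerm P s := by
              apply Fin.ext; rw [hs]; simp; omega
            rw [hinj this]
      · obtain ⟨s0, hs0⟩ := ho
        have hslt : s0 < n := by have := z.isLt; omega
        refine ⟨pairFor ⟨s0, hslt⟩ (cyclePerm P ⟨s0, hslt⟩),
          ⟨mem_alphaMap.mpr ⟨_, rfl⟩, ?_⟩, ?_⟩
        · rw [mem_pairFor]; left; simp; omega
        · rintro B ⟨hB, hzB⟩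
          obtain ⟨s', rfl⟩ := mem_alphaMap.mp hB
          rcases mem_pairFor.mp hzB with h | h
          · have : s' = (⟨s0, hslt⟩ : Fin n) := by apply Fin.ext; simp; omega
            rw [this]
          · omega
  · intro B hB
    obtain ⟨s, rfl⟩ := mem_alphaMap.mp hB
    exact pairFor_card _ _

/-- `alphaMap` determines `cyclePerm`. -/
lemma cyclePerm_determined {P P' : Finset (Finset (Fin n))}
    (h : alphaMap P = alphaMap P') : cyclePerm P = cyclePerm P' := by
  funext s
  have h1 : pairFor s (cyclePerm P s) ∈ alphaMap P' := by
    rw [← h]; exact mem_alphaMap.mpr ⟨s, rfl⟩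
  obtain ⟨s', he⟩ := mem_alphaMap.mp h1
  -- 2s+1 ∈ pairFor s' σ's'; odd, so s' = s
  have hmem : (⟨2 * s.val + 1, by have := s.isLt; omega⟩ : Fin (2*n)) ∈
      pairFor s' (cyclePerm P' s') := by
    rw [← he]; exact Finset.mem_insert_self _ _
  rcases mem_pairFor.mp hmem with h2 | h2
  · have hss : s' = s := by apply Fin.ext; simp at h2; omega
    rw [hss] at he
    have hmem2 : (⟨2 * (cyclePerm P s).val, by have := (cyclePerm P s).isLt; omega⟩ :
        Fin (2*n)) ∈ pairFor s (cyclePerm P' s) := by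
      rw [← he, mem_pairFor]; right; rfl
    rcases mem_pairFor.mp hmem2 with h3 | h3
    · simp at h3; omega
    · simp at h3; exact Fin.ext (by omega)
  · simp at h2; omega

end PairStructure
section Forward
variable {n : ℕ} {P : Finset (Finset (Fin n))}

/-- If `s < σ s`, then `σ` maps the open interval `(s, σ s)` into itself. -/
lemma closure_gt (hP : IsPartitionOf n P) (hnc : IsNoncrossing P) {s u : Fin n}
    (h1 : s < cyclePerm P s) (h2 : s < u) (h3 : u < cyclePerm P s) :
    s < cyclePerm P u ∧ cyclePerm P u < cyclePerm P s := by
  obtain ⟨_, hmin⟩ := cyclePerm_of_gt hP (cyclePerm_mem hP s) h1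
  have hu_not : u ∉ theBlock P s := fun hu =>
    absurd (hmin u hu h2) (not_le.mpr h3)
  have hσu_not : cyclePerm P u ∉ theBlock P s := by
    intro hσu
    have hb : theBlock P (cyclePerm P u) = theBlock P s := theBlock_eq_of_mem hP hσu
    have hb2 : theBlock P (cyclePerm P u) = theBlock P u := theBlock_cyclePerm hP u
    exact hu_not (hb ▸ hb2 ▸ mem_theBlock_self hP u)
  rcases lt_trichotomy (cyclePerm P u) s with hlt | heq | hgt
  · exfalso
    obtain ⟨B, hB, hm1, hm2⟩ := hnc (cyclePerm P u) s u (cyclePerm P s) hlt h2 h3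
      (sameBlock_of_both hP (cyclePerm_mem hP u) (mem_theBlock_self hP u))
      (sameBlock_of_both hP (mem_theBlock_self hP s) (cyclePerm_mem hP s))
    exact hσu_not ((theBlock_eq hP hB hm2) ▸ hm1)
  · exact absurd (heq ▸ mem_theBlock_self hP s) hσu_not
  · rcases lt_trichotomy (cyclePerm P u) (cyclePerm P s) with hlt2 | heq2 | hgt2
    · exact ⟨hgt, hlt2⟩
    · exact absurd (heq2 ▸ cyclePerm_mem hP s) hσu_not
    · exfalso
      obtain ⟨B, hB, hm1, hm2⟩ := hnc s u (cyclePerm P s) (cyclePerm P u) h2 h3 hgt2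
        (sameBlock_of_both hP (mem_theBlock_self hP s) (cyclePerm_mem hP s))
        (sameBlock_of_both hP (mem_theBlock_self hP u) (cyclePerm_mem hP u))
      exact hu_not ((theBlock_eq hP hB hm1) ▸ hm2)

/-- If `σ s ≤ s`, then `σ` maps `[σ s, s)` into `(σ s, s]`. -/
lemma closure_wrap (hP : IsPartitionOf n P) (hnc : IsNoncrossing P) {s u : Fin n}
    (h1 : cyclePerm P s ≤ s) (h2 : cyclePerm P s ≤ u) (h3 : u < s) :
    cyclePerm P s < cyclePerm P u ∧ cyclePerm P u ≤ s := by
  have hall : ∀ w ∈ theBlock P s, w ≤ s := by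
    intro w hw
    by_contra hsw
    obtain ⟨hgt, _⟩ := cyclePerm_of_gt hP hw (not_le.mp hsw)
    exact absurd h1 (not_le.mpr hgt)
  by_cases hu : u ∈ theBlock P s
  · -- u in the block of s : σu is the next block element after u, which is in (u, s]
    have hs_in_u : s ∈ theBlock P u := by
      rw [theBlock_eq_of_mem hP hu]; exact mem_theBlock_self hP s
    obtain ⟨hgt, hmin⟩ := cyclePerm_of_gt hP hs_in_u h3
    exact ⟨lt_of_le_of_lt h2 hgt, hmin s hs_in_u h3⟩
  · have hσu_not : cyclePerm P u ∉ theBlock P s := by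
      intro hσu
      have hb : theBlock P (cyclePerm P u) = theBlock P s := theBlock_eq_of_mem hP hσu
      have hb2 : theBlock P (cyclePerm P u) = theBlock P u := theBlock_cyclePerm hP u
      exact hu (hb ▸ hb2 ▸ mem_theBlock_self hP u)
    have hne : cyclePerm P s ≠ u := by
      intro he
      exact hu (he ▸ cyclePerm_mem hP s)
    have h2' : cyclePerm P s < u := lt_of_le_of_ne h2 hne
    rcases lt_trichotomy (cyclePerm P u) (cyclePerm P s) with hlt | heq | hgt
    · exfalso
      obtain ⟨B, hB, hm1, hm2⟩ := hnc (cyclePerm P u) (cyclePerm P s) u s hlt h2' h3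
        (sameBlock_of_both hP (cyclePerm_mem hP u) (mem_theBlock_self hP u))
        (sameBlock_of_both hP (cyclePerm_mem hP s) (mem_theBlock_self hP s))
      -- σu and σs in a common block B ⇒ σu ∈ block s
      have : theBlock P (cyclePerm P s) = B := theBlock_eq hP hB hm2
      have : cyclePerm P u ∈ theBlock P (cyclePerm P s) := this ▸ hm1
      rw [theBlock_cyclePerm hP s] at this
      exact hσu_not this
    · exact absurd (heq ▸ cyclePerm_mem hP s) hσu_not
    · rcases le_or_gt (cyclePerm P u) s with hle | hgt2
      · exact ⟨hgt, hle⟩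
      · exfalso
        obtain ⟨B, hB, hm1, hm2⟩ := hnc (cyclePerm P s) u s (cyclePerm P u) h2' h3 hgt2
          (sameBlock_of_both hP (cyclePerm_mem hP s) (mem_theBlock_self hP s))
          (sameBlock_of_both hP (mem_theBlock_self hP u) (cyclePerm_mem hP u))
        have : theBlock P (cyclePerm P s) = B := theBlock_eq hP hB hm1
        have : u ∈ theBlock P (cyclePerm P s) := this ▸ hm2
        rw [theBlock_cyclePerm hP s] at this
        exact hu this

/-- The image of a noncrossing partition under `alphaMap` is noncrossing. -/
lemma alphaMap_noncrossing (hP : IsPartitionOf n P) (hnc : IsNoncrossing P) :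
    IsNoncrossing (alphaMap P) := by
  intro a b c d hab hbc hcd hac hbd
  exfalso
  obtain ⟨B1, hB1, haB, hcB⟩ := hac
  obtain ⟨B2, hB2, hbB, hdB⟩ := hbd
  obtain ⟨s, rfl⟩ := mem_alphaMap.mp hB1
  obtain ⟨u, rfl⟩ := mem_alphaMap.mp hB2
  rcases mem_pairFor.mp haB with ha | ha <;> rcases mem_pairFor.mp hcB with hc | hc <;>
    rcases mem_pairFor.mp hbB with hb | hb <;> rcases mem_pairFor.mp hdB with hd | hd
  all_goals (
    first
    | (exact absurd (Fin.ext (ha.trans hc.symm) : a = c) (ne_of_lt (lt_trans hab hbc)))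
    | (exact absurd (Fin.ext (hb.trans hd.symm) : b = d) (ne_of_lt (lt_trans hbc hcd)))
    | skip)
  -- remaining four genuine cases
  -- Case A1 : a = 2s+1, c = 2σs ; b = 2u+1, d = 2σu
  · have hsσ : s < cyclePerm P s := by
      have : a.val < c.val := lt_trans hab hbc
      rw [ha, hc] at this; exact Fin.lt_def.mpr (by omega)
    have hsu : s < u := by
      have : a.val < b.val := hab; rw [ha, hb] at this; exact Fin.lt_def.mpr (by omega)
    have huσs : u < cyclePerm P s := by
      have : b.val < c.val := hbc; rw [hb, hc] at this; exact Fin.lt_def.mpr (by omega)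
    obtain ⟨_, hlt⟩ := closure_gt hP hnc hsσ hsu huσs
    have : c.val < d.val := hcd
    rw [hc, hd] at this
    exact absurd (Fin.lt_def.mp hlt) (by omega)
  -- Case A2 : a = 2s+1, c = 2σs ; b = 2σu, d = 2u+1
  · have hsσ : s < cyclePerm P s := by
      have : a.val < c.val := lt_trans hab hbc
      rw [ha, hc] at this; exact Fin.lt_def.mpr (by omega)
    have hsσu : s < cyclePerm P u := by
      have : a.val < b.val := hab; rw [ha, hb] at this; exact Fin.lt_def.mpr (by omega)
    have hσuσs : cyclePerm P u < cyclePerm P s := by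
      have : b.val < c.val := hbc; rw [hb, hc] at this; exact Fin.lt_def.mpr (by omega)
    have huσs : cyclePerm P s ≤ u := by
      have : c.val < d.val := hcd; rw [hc, hd] at this
      exact Fin.le_def.mpr (by omega)
    obtain ⟨_, hmin⟩ := cyclePerm_of_gt hP (cyclePerm_mem hP s) hsσ
    -- σu ∈ block u ; if u = σs then block u = block s; else crossing
    rcases eq_or_lt_of_le huσs with heq | hlt
    · -- u = σs
      have hbu : theBlock P u = theBlock P s := by
        rw [← heq]; exact theBlock_cyclePerm hP s
      have : cyclePerm P u ∈ theBlock P s := hbu ▸ cyclePerm_mem hP u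
      exact absurd (hmin _ this hsσu) (not_le.mpr hσuσs)
    · obtain ⟨B, hB, hm1, hm2⟩ := hnc s (cyclePerm P u) (cyclePerm P s) u hsσu hσuσs hlt
        (sameBlock_of_both hP (mem_theBlock_self hP s) (cyclePerm_mem hP s))
        (sameBlock_of_both hP (cyclePerm_mem hP u) (mem_theBlock_self hP u))
      have : theBlock P s = B := theBlock_eq hP hB hm1
      have hin : cyclePerm P u ∈ theBlock P s := this ▸ hm2
      exact absurd (hmin _ hin hsσu) (not_le.mpr hσuσs)
  -- Case B1 : a = 2σs, c = 2s+1 ; b = 2u+1, d = 2σu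
  · have hσs : cyclePerm P s ≤ s := by
      have : a.val < c.val := lt_trans hab hbc
      rw [ha, hc] at this; exact Fin.le_def.mpr (by omega)
    have hσsu : cyclePerm P s ≤ u := by
      have : a.val < b.val := hab; rw [ha, hb] at this; exact Fin.le_def.mpr (by omega)
    have hus : u < s := by
      have : b.val < c.val := hbc; rw [hb, hc] at this; exact Fin.lt_def.mpr (by omega)
    obtain ⟨_, hle⟩ := closure_wrap hP hnc hσs hσsu hus
    have : c.val < d.val := hcd
    rw [hc, hd] at this
    exact absurd (Fin.le_def.mp hle) (by omega)
  -- Case B2 : a = 2σs, c = 2s+1 ; b = 2σu, d = 2u+1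
  · have hσs : cyclePerm P s ≤ s := by
      have : a.val < c.val := lt_trans hab hbc
      rw [ha, hc] at this; exact Fin.le_def.mpr (by omega)
    have hσσ : cyclePerm P s < cyclePerm P u := by
      have : a.val < b.val := hab; rw [ha, hb] at this; exact Fin.lt_def.mpr (by omega)
    have hσus : cyclePerm P u ≤ s := by
      have : b.val < c.val := hbc; rw [hb, hc] at this; exact Fin.le_def.mpr (by omega)
    have hsu : s < u := by
      have : c.val < d.val := hcd; rw [hc, hd] at this; exact Fin.lt_def.mpr (by omega)
    have hall : ∀ w ∈ theBlock P s, w ≤ s := by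
      intro w hw
      by_contra hsw
      obtain ⟨hgt, _⟩ := cyclePerm_of_gt hP hw (not_le.mp hsw)
      exact absurd hσs (not_le.mpr hgt)
    rcases eq_or_lt_of_le hσus with heq | hlt
    · -- σu = s : block u = block s ∋ u with u > s
      have hbu : theBlock P u = theBlock P s := by
        rw [← heq]; exact (theBlock_cyclePerm hP u).symm
      have : u ∈ theBlock P s := hbu ▸ mem_theBlock_self hP u
      exact absurd (hall u this) (not_le.mpr hsu)
    · obtain ⟨B, hB, hm1, hm2⟩ := hnc (cyclePerm P s) (cyclePerm P u) s u hσσ hlt hsu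
        (sameBlock_of_both hP (cyclePerm_mem hP s) (mem_theBlock_self hP s))
        (sameBlock_of_both hP (cyclePerm_mem hP u) (mem_theBlock_self hP u))
      have hBs : theBlock P (cyclePerm P s) = B := theBlock_eq hP hB hm1
      have : cyclePerm P u ∈ theBlock P (cyclePerm P s) := hBs ▸ hm2
      rw [theBlock_cyclePerm hP s] at this
      -- σu ∈ block s and block σu = block u ⇒ u ∈ block s, u > s : contra
      have hbu : theBlock P u = theBlock P s := by
        rw [← theBlock_cyclePerm hP u]
        exact theBlock_eq_of_mem hP this
      have : u ∈ theBlock P s := hbu ▸ mem_theBlock_self hP u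
      exact absurd (hall u this) (not_le.mpr hsu)

end Forward
section Backward
variable {n : ℕ} {Q : Finset (Finset (Fin (2*n)))} {σ : Fin n → Fin n}

def oddEl (s : Fin n) : Fin (2*n) := ⟨2*s.val+1, by have := s.isLt; omega⟩
def evnEl (t : Fin n) : Fin (2*n) := ⟨2*t.val, by have := t.isLt; omega⟩

lemma oddEl_val (s : Fin n) : (oddEl s).val = 2*s.val+1 := rfl
lemma evnEl_val (t : Fin n) : (evnEl t).val = 2*t.val := rfl

lemma oddEl_mem_pairFor (s t : Fin n) : oddEl s ∈ pairFor s t :=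
  mem_pairFor.mpr (Or.inl rfl)

lemma evnEl_mem_pairFor (s t : Fin n) : evnEl t ∈ pairFor s t :=
  mem_pairFor.mpr (Or.inr rfl)

lemma block_eq_pair (hQ : IsPartitionOf (2*n) Q) {B : Finset (Fin (2*n))}
    {z : Fin (2*n)} {s t : Fin n} (hB : B ∈ Q) (hz : z ∈ B)
    (hp : pairFor s t ∈ Q) (hz2 : z ∈ pairFor s t) : B = pairFor s t :=
  block_unique hQ hB hz hp hz2

variable (hQ : IsPartitionOf (2*n) Q) (hnc : IsNoncrossing Q)
  (hpair : ∀ s, pairFor s (σ s) ∈ Q)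

include hQ hpair in
lemma sigma_inj : Function.Injective σ := by
  intro s s' h
  have h1 : evnEl (σ s) ∈ pairFor s' (σ s') := h ▸ evnEl_mem_pairFor s' (σ s')
  have := block_eq_pair hQ (hpair s) (evnEl_mem_pairFor s (σ s)) (hpair s') h1
  have h2 : oddEl s ∈ pairFor s' (σ s') := this ▸ oddEl_mem_pairFor s (σ s)
  rcases mem_pairFor.mp h2 with h3 | h3
  · rw [oddEl_val] at h3
    exact Fin.ext (by omega)
  · rw [oddEl_val] at h3
    exact absurd h3 (by omega)

include hQ hnc hpair in
lemma backward_gt {s u : Fin n} (h1 : s < σ s) (h2 : s < u) (h3 : u < σ s) :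
    s < σ u ∧ σ u < σ s := by
  have v1 : s.val < (σ s).val := h1
  have v2 : s.val < u.val := h2
  have v3 : u.val < (σ s).val := h3
  have sb : ∀ w, SameBlock Q (oddEl w) (evnEl (σ w)) :=
    fun w => ⟨_, hpair w, oddEl_mem_pairFor _ _, evnEl_mem_pairFor _ _⟩
  have sb' : ∀ w, SameBlock Q (evnEl (σ w)) (oddEl w) :=
    fun w => ⟨_, hpair w, evnEl_mem_pairFor _ _, oddEl_mem_pairFor _ _⟩
  rcases lt_trichotomy (σ u) s with hlt | heq | hgt
  · exfalso
    have v4 : (σ u).val < s.val := hlt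
    obtain ⟨B, hB, hm1, hm2⟩ := hnc (evnEl (σ u)) (oddEl s) (oddEl u) (evnEl (σ s))
      (by rw [Fin.lt_def, evnEl_val, oddEl_val]; omega)
      (by rw [Fin.lt_def, oddEl_val, oddEl_val]; omega)
      (by rw [Fin.lt_def, oddEl_val, evnEl_val]; omega)
      (sb' u) (sb s)
    have hBe : B = pairFor s (σ s) := block_eq_pair hQ hB hm2 (hpair s) (oddEl_mem_pairFor _ _)
    have hh : evnEl (σ u) ∈ pairFor s (σ s) := hBe ▸ hm1
    rcases mem_pairFor.mp hh with h | h <;> rw [evnEl_val] at h <;> omega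
  · exfalso
    have v4 : (σ u).val = s.val := congrArg Fin.val heq
    obtain ⟨B, hB, hm1, hm2⟩ := hnc (evnEl (σ u)) (oddEl s) (oddEl u) (evnEl (σ s))
      (by rw [Fin.lt_def, evnEl_val, oddEl_val]; omega)
      (by rw [Fin.lt_def, oddEl_val, oddEl_val]; omega)
      (by rw [Fin.lt_def, oddEl_val, evnEl_val]; omega)
      (sb' u) (sb s)
    have hBe : B = pairFor s (σ s) := block_eq_pair hQ hB hm2 (hpair s) (oddEl_mem_pairFor _ _)
    have hh : evnEl (σ u) ∈ pairFor s (σ s) := hBe ▸ hm1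
    rcases mem_pairFor.mp hh with h | h <;> rw [evnEl_val] at h <;> omega
  · rcases lt_trichotomy (σ u) (σ s) with hlt2 | heq2 | hgt2
    · exact ⟨hgt, hlt2⟩
    · exact absurd (sigma_inj hQ hpair heq2) (ne_of_gt h2)
    · exfalso
      have v4 : (σ s).val < (σ u).val := hgt2
      obtain ⟨B, hB, hm1, hm2⟩ := hnc (oddEl s) (oddEl u) (evnEl (σ s)) (evnEl (σ u))
        (by rw [Fin.lt_def, oddEl_val, oddEl_val]; omega)
        (by rw [Fin.lt_def, oddEl_val, evnEl_val]; omega)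
        (by rw [Fin.lt_def, evnEl_val, evnEl_val]; omega)
        (sb s) (sb u)
      have hBe : B = pairFor s (σ s) := block_eq_pair hQ hB hm1 (hpair s) (oddEl_mem_pairFor _ _)
      have hh : oddEl u ∈ pairFor s (σ s) := hBe ▸ hm2
      rcases mem_pairFor.mp hh with h | h <;> rw [oddEl_val] at h <;> omega

include hQ hnc hpair in
lemma backward_wrap {s u : Fin n} (h1 : σ s ≤ s) (h2 : σ s ≤ u) (h3 : u < s) :
    σ s < σ u ∧ σ u ≤ s := by
  have v1 : (σ s).val ≤ s.val := h1
  have v2 : (σ s).val ≤ u.val := h2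
  have v3 : u.val < s.val := h3
  have sb : ∀ w, SameBlock Q (oddEl w) (evnEl (σ w)) :=
    fun w => ⟨_, hpair w, oddEl_mem_pairFor _ _, evnEl_mem_pairFor _ _⟩
  have sb' : ∀ w, SameBlock Q (evnEl (σ w)) (oddEl w) :=
    fun w => ⟨_, hpair w, evnEl_mem_pairFor _ _, oddEl_mem_pairFor _ _⟩
  rcases lt_trichotomy (σ u) (σ s) with hlt | heq | hgt
  · exfalso
    have v4 : (σ u).val < (σ s).val := hlt
    obtain ⟨B, hB, hm1, hm2⟩ := hnc (evnEl (σ u)) (evnEl (σ s)) (oddEl u) (oddEl s)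
      (by rw [Fin.lt_def, evnEl_val, evnEl_val]; omega)
      (by rw [Fin.lt_def, evnEl_val, oddEl_val]; omega)
      (by rw [Fin.lt_def, oddEl_val, oddEl_val]; omega)
      (sb' u)
      (⟨_, hpair s, evnEl_mem_pairFor _ _, oddEl_mem_pairFor _ _⟩)
    have hBe : B = pairFor s (σ s) := block_eq_pair hQ hB hm2 (hpair s) (evnEl_mem_pairFor _ _)
    have hh : evnEl (σ u) ∈ pairFor s (σ s) := hBe ▸ hm1
    rcases mem_pairFor.mp hh with h | h <;> rw [evnEl_val] at h <;> omega
  · exact absurd (sigma_inj hQ hpair heq) (ne_of_lt h3)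
  · rcases le_or_gt (σ u) s with hle | hgt2
    · exact ⟨hgt, hle⟩
    · exfalso
      have v4 : s.val < (σ u).val := hgt2
      obtain ⟨B, hB, hm1, hm2⟩ := hnc (evnEl (σ s)) (oddEl u) (oddEl s) (evnEl (σ u))
        (by rw [Fin.lt_def, evnEl_val, oddEl_val]; omega)
        (by rw [Fin.lt_def, oddEl_val, oddEl_val]; omega)
        (by rw [Fin.lt_def, oddEl_val, evnEl_val]; omega)
        (⟨_, hpair s, evnEl_mem_pairFor _ _, oddEl_mem_pairFor _ _⟩)
        (sb u)
      have hBe : B = pairFor s (σ s) := block_eq_pair hQ hB hm1 (hpair s) (evnEl_mem_pairFor _ _)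
      have hh : oddEl u ∈ pairFor s (σ s) := hBe ▸ hm2
      rcases mem_pairFor.mp hh with h | h <;> rw [oddEl_val] at h <;> omega

include hQ hnc hpair in
lemma backward_gt_iter {s u : Fin n} (h1 : s < σ s) (h2 : s < u) (h3 : u < σ s) :
    ∀ j, s < σ^[j] u ∧ σ^[j] u < σ s := by
  intro j
  induction j with
  | zero => simpa using ⟨h2, h3⟩
  | succ j ih =>
    rw [Function.iterate_succ_apply']
    exact backward_gt hQ hnc hpair h1 ih.1 ih.2

include hQ hnc hpair in
lemma backward_wrap_iter {s : Fin n} (h1 : σ s ≤ s) :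
    ∀ j, σ s ≤ σ^[j] s ∧ σ^[j] s ≤ s := by
  intro j
  induction j with
  | zero =>
    simp only [Function.iterate_zero, id_eq]
    exact ⟨h1, le_refl s⟩
  | succ j ih =>
    rw [Function.iterate_succ_apply']
    rcases eq_or_lt_of_le ih.2 with heq | hlt
    · rw [heq]; exact ⟨le_refl _, h1⟩
    · obtain ⟨ha, hb⟩ := backward_wrap hQ hnc hpair h1 ih.1 hlt
      exact ⟨le_of_lt ha, hb⟩

end Backward
section Reconstruct
variable {n : ℕ} {Q : Finset (Finset (Fin (2*n)))} {σ : Fin n → Fin n}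

/-- The partition of `Fin n` into orbits of `σ`. -/
noncomputable def orbP (σ : Fin n → Fin n) : Finset (Finset (Fin n)) :=
  Finset.univ.image (fun s => Finset.univ.filter (fun t => OrbRel σ s t))

lemma orbP_partition (hσ : Function.Injective σ) : IsPartitionOf n (orbP σ) := by
  constructor
  · intro B hB
    obtain ⟨s, _, rfl⟩ := Finset.mem_image.mp hB
    exact ⟨s, Finset.mem_filter.mpr ⟨Finset.mem_univ s, OrbRel.refl σ s⟩⟩
  · intro s
    refine ⟨Finset.univ.filter (fun t => OrbRel σ s t),
      ⟨Finset.mem_image.mpr ⟨s, Finset.mem_univ s, rfl⟩,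
        Finset.mem_filter.mpr ⟨Finset.mem_univ s, OrbRel.refl σ s⟩⟩, ?_⟩
    rintro B ⟨hB, hsB⟩
    obtain ⟨w, _, rfl⟩ := Finset.mem_image.mp hB
    have hws : OrbRel σ w s := (Finset.mem_filter.mp hsB).2
    ext t
    simp only [Finset.mem_filter, Finset.mem_univ, true_and]
    exact ⟨fun h => OrbRel.trans (OrbRel.symm hσ hws) h,
      fun h => OrbRel.trans hws h⟩

lemma orbP_sameBlock (hσ : Function.Injective σ) {a b : Fin n} :
    SameBlock (orbP σ) a b ↔ OrbRel σ a b := by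
  constructor
  · rintro ⟨B, hB, ha, hb⟩
    obtain ⟨w, _, rfl⟩ := Finset.mem_image.mp hB
    exact OrbRel.trans (OrbRel.symm hσ (Finset.mem_filter.mp ha).2)
      (Finset.mem_filter.mp hb).2
  · intro h
    exact ⟨Finset.univ.filter (fun t => OrbRel σ a t),
      Finset.mem_image.mpr ⟨a, Finset.mem_univ a, rfl⟩,
      Finset.mem_filter.mpr ⟨Finset.mem_univ a, OrbRel.refl σ a⟩,
      Finset.mem_filter.mpr ⟨Finset.mem_univ b, h⟩⟩

lemma orbP_theBlock (hσ : Function.Injective σ) (s : Fin n) :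
    theBlock (orbP σ) s = Finset.univ.filter (fun t => OrbRel σ s t) := by
  ext t
  rw [mem_theBlock, orbP_sameBlock hσ]
  simp

variable (hQ : IsPartitionOf (2*n) Q) (hnc : IsNoncrossing Q)
  (hpair : ∀ s, pairFor s (σ s) ∈ Q)

include hQ hnc hpair in
lemma orbP_cyclePerm : cyclePerm (orbP σ) = σ := by
  have hσ : Function.Injective σ := sigma_inj hQ hpair
  have hP : IsPartitionOf n (orbP σ) := orbP_partition hσ
  funext s
  have hmem : σ s ∈ theBlock (orbP σ) s := by
    rw [orbP_theBlock hσ]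
    exact Finset.mem_filter.mpr ⟨Finset.mem_univ _, OrbRel.step σ s⟩
  by_cases hlt : s < σ s
  · obtain ⟨hgt, hmin⟩ := cyclePerm_of_gt hP hmem hlt
    have hle : cyclePerm (orbP σ) s ≤ σ s := hmin _ hmem hlt
    rcases eq_or_lt_of_le hle with heq | hlt2
    · exact heq
    · exfalso
      have hcp : OrbRel σ s (cyclePerm (orbP σ) s) := by
        have := cyclePerm_mem hP s
        rw [orbP_theBlock hσ] at this
        exact (Finset.mem_filter.mp this).2
      obtain ⟨j, hj⟩ := OrbRel.symm hσ hcp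
      have := (backward_gt_iter hQ hnc hpair hlt hgt hlt2 j).1
      rw [hj] at this
      exact lt_irrefl s this
  · have hge : σ s ≤ s := not_lt.mp hlt
    have hall : ∀ w ∈ theBlock (orbP σ) s, w ≤ s := by
      intro w hw
      rw [orbP_theBlock hσ] at hw
      obtain ⟨j, hj⟩ := (Finset.mem_filter.mp hw).2
      have := (backward_wrap_iter hQ hnc hpair hge j).2
      rwa [hj] at this
    obtain ⟨_, hmin⟩ := cyclePerm_of_wrap hP hall
    have h1 : cyclePerm (orbP σ) s ≤ σ s := hmin _ hmem
    have h2 : σ s ≤ cyclePerm (orbP σ) s := by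
      have hcp := cyclePerm_mem hP s
      rw [orbP_theBlock hσ] at hcp
      obtain ⟨j, hj⟩ := (Finset.mem_filter.mp hcp).2
      have := (backward_wrap_iter hQ hnc hpair hge j).1
      rwa [hj] at this
    exact le_antisymm h1 h2

include hQ hnc hpair in
lemma orbP_noncrossing : IsNoncrossing (orbP σ) := by
  have hσ : Function.Injective σ := sigma_inj hQ hpair
  intro a b c d hab hbc hcd hac hbd
  have hac' : OrbRel σ a c := (orbP_sameBlock hσ).mp hac
  have hbd' : OrbRel σ b d := (orbP_sameBlock hσ).mp hbd
  by_cases hab' : OrbRel σ a b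
  · exact (orbP_sameBlock hσ).mpr hab'
  exfalso
  set F := Finset.univ.filter (fun y => OrbRel σ a y ∧ y < b) with hF
  have hFne : F.Nonempty := ⟨a, Finset.mem_filter.mpr ⟨Finset.mem_univ a,
    OrbRel.refl σ a, hab⟩⟩
  set x := F.max' hFne with hxdef
  obtain ⟨_, hxa, hxb⟩ := Finset.mem_filter.mp (F.max'_mem hFne)
  have hxc : OrbRel σ x c := OrbRel.trans (OrbRel.symm hσ hxa) hac'
  have hxσ : x < σ x := by
    by_contra h
    push_neg at h
    obtain ⟨j, hj⟩ := hxc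
    have := (backward_wrap_iter hQ hnc hpair h j).2
    rw [hj] at this
    exact absurd (lt_of_lt_of_le (lt_trans hxb hbc) this) (lt_irrefl x)
  rcases lt_trichotomy (σ x) b with h | h | h
  · have hmem : σ x ∈ F := Finset.mem_filter.mpr ⟨Finset.mem_univ _,
      OrbRel.trans hxa (OrbRel.step σ x), h⟩
    exact absurd (lt_of_lt_of_le hxσ (Finset.le_max' F _ hmem)) (lt_irrefl x)
  · exact hab' (OrbRel.trans hxa (h ▸ OrbRel.step σ x))
  · -- x < b < σ x
    have hσxc : σ x ≤ c := by
      by_contra hcc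
      push_neg at hcc
      obtain ⟨m, hm⟩ := OrbRel.symm hσ hac'
      have hlt2 := (backward_gt_iter hQ hnc hpair hxσ (lt_trans hxb hbc) hcc m).1
      rw [hm] at hlt2
      have hax : a ≤ x := Finset.le_max' F a (Finset.mem_filter.mpr
        ⟨Finset.mem_univ a, OrbRel.refl σ a, hab⟩)
      exact absurd (lt_of_le_of_lt hax hlt2) (lt_irrefl _)
    obtain ⟨m, hm⟩ := hbd'
    have := (backward_gt_iter hQ hnc hpair hxσ hxb h m).2
    rw [hm] at this
    exact absurd (lt_trans (lt_of_le_of_lt hσxc hcd) this) (lt_irrefl _)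

end Reconstruct
section Arith

lemma modEq_reduce {m a b c d : ℕ} (ha : a ≡ c [MOD m]) (hb : b ≡ d [MOD m]) :
    (a ≡ b [MOD m]) ↔ (c ≡ d [MOD m]) :=
  ⟨fun h => (ha.symm.trans h).trans hb, fun h => (ha.trans h).trans hb.symm⟩

lemma modEq_char {m a b : ℕ} (hm : 2 ≤ m) (ha : a ≤ m) (hb : b ≤ 2*m) :
    a ≡ b [MOD m] ↔ (a = b ∨ a + m = b ∨ a + 2*m = b ∨ b + m = a) := by
  constructor
  · intro h
    rcases le_or_gt a b with hab | hab
    · obtain ⟨c, hc⟩ := (Nat.modEq_iff_dvd' hab).mp h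
      match c with
      | 0 => left; omega
      | 1 => right; left; omega
      | 2 => right; right; left; omega
      | (c+3) =>
        exfalso
        have h3 : m * 3 ≤ m * (c+3) := Nat.mul_le_mul (le_refl m) (by omega)
        generalize hD : m * (c+3) = D at hc h3
        omega
    · obtain ⟨c, hc⟩ := (Nat.modEq_iff_dvd' (le_of_lt hab)).mp h.symm
      match c with
      | 0 => left; omega
      | 1 => right; right; right; omega
      | (c+2) =>
        exfalso
        have h3 : m * 2 ≤ m * (c+2) := Nat.mul_le_mul (le_refl m) (by omega)
        generalize hD : m * (c+2) = D at hc h3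
        omega
  · rintro (rfl | h | h | h)
    · rfl
    · show a % m = b % m
      rw [← h, Nat.add_mod_right]
    · show a % m = b % m
      rw [← h]
      have : a + 2*m = a + m + m := by ring
      rw [this, Nat.add_mod_right, Nat.add_mod_right]
    · show a % m = b % m
      rw [← h, Nat.add_mod_right]

lemma mod_double_odd (v m : ℕ) (hm : 0 < m) : (2*v+1) % (2*m) = 2*(v % m) + 1 := by
  conv_lhs => rw [← Nat.mod_add_div v m]
  have h : 2*(v % m + m*(v/m))+1 = (2*(v%m)+1) + (2*m)*(v/m) := by ring
  rw [h, Nat.add_mul_mod_self_left, Nat.mod_eq_of_lt (by have := Nat.mod_lt v hm; omega)]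

lemma mod_double_even (v m : ℕ) (hm : 0 < m) : (2*v) % (2*m) = 2*(v % m) := by
  conv_lhs => rw [← Nat.mod_add_div v m]
  have h : 2*(v % m + m*(v/m)) = (2*(v%m)) + (2*m)*(v/m) := by ring
  rw [h, Nat.add_mul_mod_self_left, Nat.mod_eq_of_lt (by have := Nat.mod_lt v hm; omega)]

lemma shift_iff (p : ℕ) (hp : 1 ≤ p) {n : ℕ} (s t : Fin n) :
    ((val1 t : ZMod (2*p)) = (val1 s : ZMod (2*p)) + 1) ↔
      (t.val % (2*p) = s.val % (2*p) + 1 ∨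
        (s.val % (2*p) = 2*p - 1 ∧ t.val % (2*p) = 0)) := by
  have h2p : 0 < 2*p := by omega
  have hrt := Nat.mod_lt t.val h2p
  have hrs := Nat.mod_lt s.val h2p
  have hcast : ((val1 s : ZMod (2*p)) + 1) = ((val1 s + 1 : ℕ) : ZMod (2*p)) := by
    push_cast; ring
  rw [hcast, ZMod.natCast_eq_natCast_iff,
    modEq_reduce ((Nat.mod_modEq (val1 t) (2*p)).symm)
      ((Nat.mod_modEq (val1 s + 1) (2*p)).symm),
    modEq_char (by omega) (le_of_lt (Nat.mod_lt _ h2p)) (le_of_lt (by have := Nat.mod_lt (val1 s + 1) h2p; omega))]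
  unfold val1
  -- relate (t.val+1) % 2p and (s.val+2) % 2p to t.val % 2p, s.val % 2p
  have e1 : (t.val + 1) % (2*p) = (t.val % (2*p) + 1) % (2*p) := by
    conv_lhs => rw [← Nat.mod_add_div t.val (2*p)]
    rw [add_right_comm, Nat.add_mul_mod_self_left]
  have e2 : (s.val + 1 + 1) % (2*p) = (s.val % (2*p) + 2) % (2*p) := by
    conv_lhs => rw [← Nat.mod_add_div s.val (2*p)]
    have : s.val % (2*p) + 2*p * (s.val / (2*p)) + 1 + 1 =
      (s.val % (2*p) + 2) + 2*p * (s.val / (2*p)) := by ring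
    rw [this, Nat.add_mul_mod_self_left]
  rw [e1, e2]
  -- now everything is in terms of small residues mod 2p
  rcases Nat.lt_or_ge (t.val % (2*p) + 1) (2*p) with h | h
  · rw [Nat.mod_eq_of_lt h]
    rcases Nat.lt_or_ge (s.val % (2*p) + 2) (2*p) with h' | h'
    · rw [Nat.mod_eq_of_lt h']; omega
    · have : (s.val % (2*p) + 2) % (2*p) = s.val % (2*p) + 2 - 2*p := by
        rw [Nat.mod_eq_sub_mod h', Nat.mod_eq_of_lt (by omega)]
      rw [this]; omega
  · have h1 : (t.val % (2*p) + 1) % (2*p) = 0 := by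
      have : t.val % (2*p) + 1 = 2*p := by omega
      rw [this, Nat.mod_self]
    rw [h1]
    rcases Nat.lt_or_ge (s.val % (2*p) + 2) (2*p) with h' | h'
    · rw [Nat.mod_eq_of_lt h']; omega
    · have : (s.val % (2*p) + 2) % (2*p) = s.val % (2*p) + 2 - 2*p := by
        rw [Nat.mod_eq_sub_mod h', Nat.mod_eq_of_lt (by omega)]
      rw [this]; omega

lemma refl_iff (p : ℕ) (hp : 1 ≤ p) {n : ℕ} (s t : Fin n) :
    ((val1 t : ZMod (2*p)) = 1 - (val1 s : ZMod (2*p))) ↔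
      (t.val % (2*p) + s.val % (2*p) = 2*p - 1) := by
  have h2p : 0 < 2*p := by omega
  have hrt := Nat.mod_lt t.val h2p
  have hrs := Nat.mod_lt s.val h2p
  rw [eq_sub_iff_add_eq]
  have hcast : ((val1 t : ZMod (2*p)) + (val1 s : ZMod (2*p))) =
      ((val1 t + val1 s : ℕ) : ZMod (2*p)) := by push_cast; ring
  have hone : (1 : ZMod (2*p)) = ((1:ℕ) : ZMod (2*p)) := by push_cast; ring
  rw [hcast, hone, ZMod.natCast_eq_natCast_iff]
  have hsum : val1 t + val1 s = t.val + s.val + 2 := by unfold val1; ring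
  rw [hsum]
  have hred : (t.val + s.val + 2) ≡ (t.val % (2*p) + s.val % (2*p) + 2) [MOD 2*p] :=
    ((Nat.mod_modEq t.val (2*p)).symm.add ((Nat.mod_modEq s.val (2*p)).symm)).add_right 2
  rw [modEq_reduce hred (Nat.ModEq.refl 1),
    show ((t.val % (2*p) + s.val % (2*p) + 2 ≡ 1 [MOD 2*p]) ↔
      (1 ≡ t.val % (2*p) + s.val % (2*p) + 2 [MOD 2*p])) from ⟨Nat.ModEq.symm, Nat.ModEq.symm⟩,
    modEq_char (by omega) (by omega) (by omega)]
  omega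

lemma res_odd (p : ℕ) (hp : 1 ≤ p) {n m : ℕ} (s : Fin n) (x : Fin m)
    (hx : x.val = 2*s.val+1) : res x (4*p) = 2*(s.val % (2*p)) + 2 := by
  have h2p : 0 < 2*p := by omega
  unfold res
  rw [hx, show 4*p = 2*(2*p) from by ring, mod_double_odd s.val (2*p) h2p]

lemma res_evn (p : ℕ) (hp : 1 ≤ p) {n m : ℕ} (t : Fin n) (y : Fin m)
    (hy : y.val = 2*t.val) : res y (4*p) = 2*(t.val % (2*p)) + 1 := by
  have h2p : 0 < 2*p := by omega
  unfold res
  rw [hy, show 4*p = 2*(2*p) from by ring, mod_double_even t.val (2*p) h2p]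

lemma sum_iff (p : ℕ) (hp : 1 ≤ p) {n m : ℕ} (s t : Fin n) (x y : Fin m)
    (hx : x.val = 2*s.val+1) (hy : y.val = 2*t.val) :
    ((val1 x : ZMod (4*p)) + (val1 y : ZMod (4*p)) = 1) ↔
      (t.val % (2*p) + s.val % (2*p) = 2*p - 1) := by
  have h2p : 0 < 2*p := by omega
  have hrt := Nat.mod_lt t.val h2p
  have hrs := Nat.mod_lt s.val h2p
  have hcast : ((val1 x : ZMod (4*p)) + (val1 y : ZMod (4*p))) =
      ((val1 x + val1 y : ℕ) : ZMod (4*p)) := by push_cast; ring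
  have hone : (1 : ZMod (4*p)) = ((1:ℕ) : ZMod (4*p)) := by push_cast; ring
  rw [hcast, hone, ZMod.natCast_eq_natCast_iff]
  have hsum : val1 x + val1 y = 2*s.val + 2*t.val + 3 := by unfold val1; omega
  rw [hsum, show 4*p = 2*(2*p) from by ring]
  have hs2 : (2*s.val) ≡ 2*(s.val % (2*p)) [MOD 2*(2*p)] :=
    Nat.ModEq.mul_left' 2 (Nat.mod_modEq s.val (2*p)).symm
  have ht2 : (2*t.val) ≡ 2*(t.val % (2*p)) [MOD 2*(2*p)] :=
    Nat.ModEq.mul_left' 2 (Nat.mod_modEq t.val (2*p)).symm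
  have hred : (2*s.val + 2*t.val + 3) ≡
      (2*(s.val % (2*p)) + 2*(t.val % (2*p)) + 3) [MOD 2*(2*p)] :=
    (hs2.add ht2).add_right 3
  rw [modEq_reduce hred (Nat.ModEq.refl 1),
    show ((2*(s.val % (2*p)) + 2*(t.val % (2*p)) + 3 ≡ 1 [MOD 2*(2*p)]) ↔
      (1 ≡ 2*(s.val % (2*p)) + 2*(t.val % (2*p)) + 3 [MOD 2*(2*p)])) from
        ⟨Nat.ModEq.symm, Nat.ModEq.symm⟩,
    modEq_char (by omega) (by omega) (by omega)]
  omega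

/-- The main arithmetic equivalence between the adaptedness condition on `(s,t)` and the
adaptedness condition on the corresponding pair `(x,y)` of the doubled word. -/
lemma cond_iff (p : ℕ) (hp : 1 ≤ p) {n m : ℕ} (s t : Fin n) (x y : Fin m)
    (hx : x.val = 2*s.val+1) (hy : y.val = 2*t.val) :
    (((val1 t : ZMod (2*p)) = (val1 s : ZMod (2*p)) + 1) ∨
      ((val1 t : ZMod (2*p)) = 1 - (val1 s : ZMod (2*p)))) ↔
    ((((val1 x : ZMod (4*p)) + (val1 y : ZMod (4*p)) = 1) ∨
      (∃ i : ℕ, 1 ≤ i ∧ i ≤ p - 1 ∧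
        ((res x (4*p) = 2*i ∧ res y (4*p) = 2*i + 1) ∨
         (res x (4*p) = 2*i + 1 ∧ res y (4*p) = 2*i))) ∨
      (∃ i : ℕ, 1 ≤ i ∧ i ≤ p - 1 ∧
        ((res x (4*p) = 4*p - 2*i ∧ res y (4*p) = 4*p + 1 - 2*i) ∨
         (res x (4*p) = 4*p + 1 - 2*i ∧ res y (4*p) = 4*p - 2*i))))) := by
  have h2p : 0 < 2*p := by omega
  have hrt := Nat.mod_lt t.val h2p
  have hrs := Nat.mod_lt s.val h2p
  have hresx := res_odd p hp s x hx
  have hresy := res_evn p hp t y hy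
  have h2 : (∃ i : ℕ, 1 ≤ i ∧ i ≤ p - 1 ∧
        ((res x (4*p) = 2*i ∧ res y (4*p) = 2*i + 1) ∨
         (res x (4*p) = 2*i + 1 ∧ res y (4*p) = 2*i))) ↔
      (s.val % (2*p) + 1 ≤ p - 1 ∧ t.val % (2*p) = s.val % (2*p) + 1) := by
    constructor
    · rintro ⟨i, hi1, hi2, (⟨ha, hb⟩ | ⟨ha, hb⟩)⟩ <;>
        rw [hresx] at ha <;> rw [hresy] at hb <;> omega
    · rintro ⟨q1, q2⟩
      exact ⟨s.val % (2*p) + 1, by omega, by omega,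
        Or.inl ⟨by rw [hresx]; omega, by rw [hresy]; omega⟩⟩
  have h3 : (∃ i : ℕ, 1 ≤ i ∧ i ≤ p - 1 ∧
        ((res x (4*p) = 4*p - 2*i ∧ res y (4*p) = 4*p + 1 - 2*i) ∨
         (res x (4*p) = 4*p + 1 - 2*i ∧ res y (4*p) = 4*p - 2*i))) ↔
      (p ≤ s.val % (2*p) ∧ s.val % (2*p) ≤ 2*p - 2 ∧
        t.val % (2*p) = s.val % (2*p) + 1) := by
    constructor
    · rintro ⟨i, hi1, hi2, (⟨ha, hb⟩ | ⟨ha, hb⟩)⟩ <;>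
        rw [hresx] at ha <;> rw [hresy] at hb <;> omega
    · rintro ⟨q1, q2, q3⟩
      exact ⟨2*p - 1 - s.val % (2*p), by omega, by omega,
        Or.inl ⟨by rw [hresx]; omega, by rw [hresy]; omega⟩⟩
  rw [shift_iff p hp s t, refl_iff p hp s t, sum_iff p hp s t x y hx hy, h2, h3]
  omega

/-- The adaptedness condition on pairs is symmetric. -/
lemma cond_symm (p : ℕ) {m : ℕ} {a b : Fin m}
    (h : (((val1 a : ZMod (4*p)) + (val1 b : ZMod (4*p)) = 1) ∨
      (∃ i : ℕ, 1 ≤ i ∧ i ≤ p - 1 ∧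
        ((res a (4*p) = 2*i ∧ res b (4*p) = 2*i + 1) ∨
         (res a (4*p) = 2*i + 1 ∧ res b (4*p) = 2*i))) ∨
      (∃ i : ℕ, 1 ≤ i ∧ i ≤ p - 1 ∧
        ((res a (4*p) = 4*p - 2*i ∧ res b (4*p) = 4*p + 1 - 2*i) ∨
         (res a (4*p) = 4*p + 1 - 2*i ∧ res b (4*p) = 4*p - 2*i))))) :
    (((val1 b : ZMod (4*p)) + (val1 a : ZMod (4*p)) = 1) ∨
      (∃ i : ℕ, 1 ≤ i ∧ i ≤ p - 1 ∧
        ((res b (4*p) = 2*i ∧ res a (4*p) = 2*i + 1) ∨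
         (res b (4*p) = 2*i + 1 ∧ res a (4*p) = 2*i))) ∨
      (∃ i : ℕ, 1 ≤ i ∧ i ≤ p - 1 ∧
        ((res b (4*p) = 4*p - 2*i ∧ res a (4*p) = 4*p + 1 - 2*i) ∨
         (res b (4*p) = 4*p + 1 - 2*i ∧ res a (4*p) = 4*p - 2*i)))) := by
  rcases h with h | ⟨i, h1, h2, h⟩ | ⟨i, h1, h2, h⟩
  · left; rw [add_comm]; exact h
  · exact Or.inr (Or.inl ⟨i, h1, h2, h.symm.imp And.symm And.symm⟩)
  · exact Or.inr (Or.inr ⟨i, h1, h2, h.symm.imp And.symm And.symm⟩)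

lemma labTilde_odd {L : Type*} (p : ℕ) (hp : 1 ≤ p) (u : ℕ → L) {n m : ℕ}
    (s : Fin n) (x : Fin m) (hx : x.val = 2*s.val+1) : labTilde p u x = lab p u s := by
  have h2p : 0 < 2*p := by omega
  have hrs := Nat.mod_lt s.val h2p
  unfold labTilde lab
  rw [res_odd p hp s x hx]
  rw [show res s (2*p) = s.val % (2*p) + 1 from rfl]
  congr 1
  split_ifs <;> omega

lemma labTilde_evn {L : Type*} (p : ℕ) (hp : 1 ≤ p) (u : ℕ → L) {n m : ℕ}
    (t : Fin n) (y : Fin m) (hy : y.val = 2*t.val) : labTilde p u y = lab p u t := by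
  have h2p : 0 < 2*p := by omega
  have hrt := Nat.mod_lt t.val h2p
  unfold labTilde lab
  rw [res_evn p hp t y hy]
  rw [show res t (2*p) = t.val % (2*p) + 1 from rfl]
  congr 1
  split_ifs <;> omega

/-- The adaptedness condition forces the two members of a pair to have opposite parity. -/
lemma cond_parity (p : ℕ) (hp : 1 ≤ p) {m : ℕ} (a b : Fin m)
    (h : (((val1 a : ZMod (4*p)) + (val1 b : ZMod (4*p)) = 1) ∨
      (∃ i : ℕ, 1 ≤ i ∧ i ≤ p - 1 ∧
        ((res a (4*p) = 2*i ∧ res b (4*p) = 2*i + 1) ∨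
         (res a (4*p) = 2*i + 1 ∧ res b (4*p) = 2*i))) ∨
      (∃ i : ℕ, 1 ≤ i ∧ i ≤ p - 1 ∧
        ((res a (4*p) = 4*p - 2*i ∧ res b (4*p) = 4*p + 1 - 2*i) ∨
         (res a (4*p) = 4*p + 1 - 2*i ∧ res b (4*p) = 4*p - 2*i))))) :
    a.val % 2 ≠ b.val % 2 := by
  have hda := Nat.mod_add_div a.val (4*p)
  have hdb := Nat.mod_add_div b.val (4*p)
  obtain ⟨ca, hca⟩ : (2:ℕ) ∣ 4*p*(a.val/(4*p)) := ⟨2*p*(a.val/(4*p)), by ring⟩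
  obtain ⟨cb, hcb⟩ : (2:ℕ) ∣ 4*p*(b.val/(4*p)) := ⟨2*p*(b.val/(4*p)), by ring⟩
  rcases h with h | ⟨i, h1, h2, h⟩ | ⟨i, h1, h2, h⟩
  · -- sum ≡ 1 mod 4p
    have hcast : ((val1 a : ZMod (4*p)) + (val1 b : ZMod (4*p))) =
        ((val1 a + val1 b : ℕ) : ZMod (4*p)) := by push_cast; ring
    have hone : (1 : ZMod (4*p)) = ((1:ℕ) : ZMod (4*p)) := by push_cast; ring
    rw [hcast, hone, ZMod.natCast_eq_natCast_iff] at h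
    have hmod : (a.val + 1 + (b.val + 1)) % (4*p) = 1 := by
      have h5 : (val1 a + val1 b) % (4*p) = 1 % (4*p) := h
      unfold val1 at h5
      rw [Nat.mod_eq_of_lt (by omega : (1:ℕ) < 4*p)] at h5
      exact h5
    have hd := Nat.mod_add_div (a.val + 1 + (b.val + 1)) (4*p)
    obtain ⟨c, hc⟩ : (2:ℕ) ∣ 4*p*((a.val + 1 + (b.val + 1))/(4*p)) :=
      ⟨2*p*((a.val + 1 + (b.val + 1))/(4*p)), by ring⟩
    omega
  · simp only [res] at h
    rcases h with ⟨ha, hb⟩ | ⟨ha, hb⟩ <;> omega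
  · simp only [res] at h
    rcases h with ⟨ha, hb⟩ | ⟨ha, hb⟩ <;> omega

end Arith
/-- Lemma 4.1. The map `π ↦ α(π) = {{2s, 2σ_π(s)−1} : s}` is a
bijection from the set `NC(W^k)` of noncrossing partitions of `{1,…,2pk}` adapted to
`W^k` (shift/reflection condition mod `2p`, blocks constant for the label map) onto the
set `NC²(W̃^k)` of noncrossing pair partitions of `{1,…,4pk}` adapted to `W̃^k`. -/
theorem statement1 (p k : ℕ) (hp : 1 ≤ p) (hk : 1 ≤ k) {L : Type*} (u : ℕ → L) :
    Set.BijOn (alphaMap (n := 2*p*k))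
      {P | IsPartitionOf (2*p*k) P ∧ IsNoncrossing P ∧
        (∀ s : Fin (2*p*k),
          (val1 (cyclePerm P s) : ZMod (2*p)) = (val1 s : ZMod (2*p)) + 1 ∨
          (val1 (cyclePerm P s) : ZMod (2*p)) = 1 - (val1 s : ZMod (2*p))) ∧
        (∀ B ∈ P, ∀ a ∈ B, ∀ b ∈ B, lab p u a = lab p u b)}
      {Q | IsPairPartition (2*(2*p*k)) Q ∧ IsNoncrossing Q ∧
        ∀ B ∈ Q, ∀ a ∈ B, ∀ b ∈ B, a ≠ b →
          labTilde p u a = labTilde p u b ∧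
          (((val1 a : ZMod (4*p)) + (val1 b : ZMod (4*p)) = 1) ∨
           (∃ i : ℕ, 1 ≤ i ∧ i ≤ p - 1 ∧
             ((res a (4*p) = 2*i ∧ res b (4*p) = 2*i + 1) ∨
              (res a (4*p) = 2*i + 1 ∧ res b (4*p) = 2*i))) ∨
           (∃ i : ℕ, 1 ≤ i ∧ i ≤ p - 1 ∧
             ((res a (4*p) = 4*p - 2*i ∧ res b (4*p) = 4*p + 1 - 2*i) ∨
              (res a (4*p) = 4*p + 1 - 2*i ∧ res b (4*p) = 4*p - 2*i))))} := by
  refine ⟨?_, ?_, ?_⟩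
  · -- MapsTo
    rintro P ⟨hP, hnc, hcond, hlab⟩
    refine ⟨alphaMap_isPairPartition hP, alphaMap_noncrossing hP hnc, ?_⟩
    intro B hB a ha b hb hab
    obtain ⟨s, rfl⟩ := mem_alphaMap.mp hB
    have hlabeq : lab p u s = lab p u (cyclePerm P s) :=
      hlab _ (theBlock_mem hP s) s (mem_theBlock_self hP s) _ (cyclePerm_mem hP s)
    rcases mem_pairFor.mp ha with ha' | ha' <;> rcases mem_pairFor.mp hb with hb' | hb'
    · exact absurd (Fin.ext (ha'.trans hb'.symm)) hab
    · constructor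
      · rw [labTilde_odd p hp u s a ha', labTilde_evn p hp u (cyclePerm P s) b hb']
        exact hlabeq
      · exact (cond_iff p hp s (cyclePerm P s) a b ha' hb').mp (hcond s)
    · constructor
      · rw [labTilde_evn p hp u (cyclePerm P s) a ha', labTilde_odd p hp u s b hb']
        exact hlabeq.symm
      · exact cond_symm p ((cond_iff p hp s (cyclePerm P s) b a hb' ha').mp (hcond s))
    · exact absurd (Fin.ext (ha'.trans hb'.symm)) hab
  · -- InjOn
    rintro P ⟨hP, -, -, -⟩ P' ⟨hP', -, -, -⟩ h
    exact partition_determined hP hP' (cyclePerm_determined h)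
  · -- SurjOn
    rintro Q ⟨⟨hQ, hcard⟩, hnc, hcond⟩
    -- every point of Fin (2*(2pk)) has a partner; define σ on slots
    have hchoice : ∀ s : Fin (2*p*k), ∃ t : Fin (2*p*k), pairFor s t ∈ Q := by
      intro s
      obtain ⟨B, ⟨hB, hzB⟩, -⟩ := hQ.2 (oddEl s)
      obtain ⟨x, y, hxy, rfl⟩ := Finset.card_eq_two.mp (hcard B hB)
      have hpar : x.val % 2 ≠ y.val % 2 :=
        cond_parity p hp x y (hcond _ hB x (by simp) y (by simp) hxy).2
      rcases Finset.mem_insert.mp hzB with hz | hz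
      · -- oddEl s = x ; partner y
        have hyev : y.val % 2 = 0 := by
          have hxo : x.val % 2 = 1 := by rw [← hz, oddEl_val]; omega
          omega
        refine ⟨⟨y.val / 2, by have := y.isLt; omega⟩, ?_⟩
        have hpf : pairFor s ⟨y.val / 2, by have := y.isLt; omega⟩ = {x, y} := by
          rw [← hz]
          show ({oddEl s, evnEl _} : Finset _) = {oddEl s, y}
          have : evnEl (⟨y.val / 2, by have := y.isLt; omega⟩ : Fin (2*p*k)) = y := by
            apply Fin.ext
            show 2 * (y.val / 2) = y.val
            omega
          rw [this]
        rw [hpf]; exact hB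
      · -- oddEl s = y ; partner x
        have hz' : y = oddEl s := (Finset.mem_singleton.mp hz).symm
        have hxev : x.val % 2 = 0 := by
          have hyo : y.val % 2 = 1 := by rw [hz', oddEl_val]; omega
          omega
        refine ⟨⟨x.val / 2, by have := x.isLt; omega⟩, ?_⟩
        have hpf : pairFor s ⟨x.val / 2, by have := x.isLt; omega⟩ = {x, y} := by
          rw [hz']
          show ({oddEl s, evnEl _} : Finset _) = {x, oddEl s}
          rw [Finset.pair_comm]
          have : evnEl (⟨x.val / 2, by have := x.isLt; omega⟩ : Fin (2*p*k)) = x := by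
            apply Fin.ext
            show 2 * (x.val / 2) = x.val
            omega
          rw [this]
        rw [hpf]; exact hB
    choose σ hσpair using hchoice
    have hσinj : Function.Injective σ := sigma_inj hQ hσpair
    have hPpart : IsPartitionOf (2*p*k) (orbP σ) := orbP_partition hσinj
    have hcp : cyclePerm (orbP σ) = σ := orbP_cyclePerm hQ hnc hσpair
    have hne : ∀ s : Fin (2*p*k), oddEl s ≠ evnEl (σ s) := by
      intro s h
      have := congrArg Fin.val h
      rw [oddEl_val, evnEl_val] at this
      omega
    have hpcond : ∀ s : Fin (2*p*k),
        labTilde p u (oddEl s) = labTilde p u (evnEl (σ s)) ∧ _ :=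
      fun s => hcond _ (hσpair s) (oddEl s) (oddEl_mem_pairFor _ _)
        (evnEl (σ s)) (evnEl_mem_pairFor _ _) (hne s)
    have hstep : ∀ w, lab p u w = lab p u (σ w) := by
      intro w
      have h1 := (hpcond w).1
      rwa [labTilde_odd p hp u w (oddEl w) rfl,
        labTilde_evn p hp u (σ w) (evnEl (σ w)) rfl] at h1
    have hiter : ∀ (j : ℕ) (w : Fin (2*p*k)), lab p u (σ^[j] w) = lab p u w := by
      intro j
      induction j with
      | zero => intro w; rfl
      | succ j ih =>
        intro w
        rw [Function.iterate_succ_apply, ih (σ w), ← hstep w]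
    refine ⟨orbP σ, ⟨hPpart, orbP_noncrossing hQ hnc hσpair, ?_, ?_⟩, ?_⟩
    · -- shift/reflection condition
      intro s
      rw [hcp]
      exact (cond_iff p hp s (σ s) (oddEl s) (evnEl (σ s)) rfl rfl).mpr (hpcond s).2
    · -- labels constant on blocks
      intro B hB a haB b hbB
      obtain ⟨w, -, rfl⟩ := Finset.mem_image.mp hB
      obtain ⟨ja, hja⟩ := (Finset.mem_filter.mp haB).2
      obtain ⟨jb, hjb⟩ := (Finset.mem_filter.mp hbB).2
      rw [← hja, ← hjb, hiter ja w, hiter jb w]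
    · -- alphaMap (orbP σ) = Q
      apply Finset.Subset.antisymm
      · intro B hB
        obtain ⟨s, rfl⟩ := mem_alphaMap.mp hB
        rw [hcp]
        exact hσpair s
      · intro B hB
        obtain ⟨x, y, hxy, rfl⟩ := Finset.card_eq_two.mp (hcard B hB)
        have hpar : x.val % 2 ≠ y.val % 2 :=
          cond_parity p hp x y (hcond _ hB x (by simp) y (by simp) hxy).2
        rcases Nat.even_or_odd x.val with hxe | hxo
        · -- y is odd
          have hyo : y.val % 2 = 1 := by
            obtain ⟨c, hc⟩ := hxe; omega
          set s : Fin (2*p*k) := ⟨y.val / 2, by have := y.isLt; omega⟩ with hs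
          have hyz : y = oddEl s := by
            apply Fin.ext; rw [oddEl_val]; simp only [hs]; omega
          have hBe : ({x, y} : Finset _) = pairFor s (σ s) :=
            block_eq_pair hQ hB (by simp) (hσpair s) (hyz ▸ oddEl_mem_pairFor s (σ s))
          rw [hBe]
          exact mem_alphaMap.mpr ⟨s, by rw [hcp]⟩
        · -- x is odd
          obtain ⟨c, hc⟩ := hxo
          set s : Fin (2*p*k) := ⟨x.val / 2, by have := x.isLt; omega⟩ with hs
          have hxz : x = oddEl s := by
            apply Fin.ext; rw [oddEl_val]; simp only [hs]; omega
          have hBe : ({x, y} : Finset _) = pairFor s (σ s) :=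
            block_eq_pair hQ hB (by simp) (hσpair s) (hxz ▸ oddEl_mem_pairFor s (σ s))
          rw [hBe]
          exact mem_alphaMap.mpr ⟨s, by rw [hcp]⟩
end

section
/- Let p ≥ 1 be an integer, let d_1,…,d_{p+1} be real numbers with d_1 ≠ 0, let (t_i)_{i≥0} be a sequence of real numbers, and set T(X) = Σ_{i≥0} t_i X^i ∈ ℝ[[X]]. Suppose ψ ∈ ℝ[[z]] has zero constant term and satisfies the formal power series equation d_1·ψ = z·(d_1ψ + d_1)·(d_1ψ + d_2)···(d_1ψ + d_{p+1})·T(d_1ψ). Then for every k ≥ 1, the coefficient m_k of z^k in ψ satisfies d_1·m_k = Σ_{r=1}^{k} P_{k,r}(d_1,…,d_{p+1}) · T_{k,r}, where P_{k,r}(d_1,…,d_{p+1}) = Σ_{j_1+⋯+j_{p+1} = kp+r, j_i ≥ 0} (1/k)·C(k,j_1)·C(k,j_2)···C(k,j_{p+1})·d_1^{j_1}···d_{p+1}^{j_{p+1}} is the generalized multivariate Fuss–Narayana polynomial, and T_{k,r} = Σ_{i_1+⋯+i_k = r−1, i_j ≥ 0} t_{i_1}·t_{i_2}···t_{i_k}.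 -/
open Finset
open scoped Classical

namespace LagAux

open PowerSeries

noncomputable def sub (F g : ℝ⟦X⟧) : ℝ⟦X⟧ := substSeries (fun n => coeff (R := ℝ) n F) g

lemma coeff_sub' (F g : ℝ⟦X⟧) (n : ℕ) :
    coeff (R := ℝ) n (sub F g) = ∑ i ∈ range (n+1), coeff (R := ℝ) i F * coeff (R := ℝ) n (g ^ i) := by
  simp [sub, substSeries]

lemma coeff_pow_eq_zero {g : ℝ⟦X⟧} (hg : constantCoeff (R := ℝ) g = 0) {n m : ℕ} (h : n < m) :
    coeff (R := ℝ) n (g ^ m) = 0 := by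
  have hd : (X : ℝ⟦X⟧) ^ m ∣ g ^ m :=
    pow_dvd_pow_of_dvd (X_dvd_iff.mpr hg) m
  exact X_pow_dvd_iff.mp hd n h

lemma coeff_sub_congr {F F' : ℝ⟦X⟧} (g : ℝ⟦X⟧) {n : ℕ}
    (h : ∀ i ≤ n, coeff (R := ℝ) i F = coeff (R := ℝ) i F') :
    coeff (R := ℝ) n (sub F g) = coeff (R := ℝ) n (sub F' g) := by
  rw [coeff_sub', coeff_sub']
  refine Finset.sum_congr rfl fun i hi => ?_
  rw [h i (by simpa [Nat.lt_succ_iff] using hi)]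

lemma sub_poly {g : ℝ⟦X⟧} (hg : constantCoeff (R := ℝ) g = 0) (P : Polynomial ℝ) :
    sub (P : ℝ⟦X⟧) g = Polynomial.aeval g P := by
  induction P using Polynomial.induction_on' with
  | add p q hp hq =>
      have : sub ((p : ℝ⟦X⟧) + (q : ℝ⟦X⟧)) g = sub (p : ℝ⟦X⟧) g + sub (q : ℝ⟦X⟧) g := by
        ext n
        rw [map_add, coeff_sub', coeff_sub', coeff_sub', ← Finset.sum_add_distrib]
        refine Finset.sum_congr rfl fun i _ => ?_
        rw [map_add]; ring
      rw [Polynomial.coe_add, this, hp, hq, map_add]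
  | monomial m a =>
      ext n
      rw [coeff_sub']
      have hcoe : ∀ i : ℕ, coeff (R := ℝ) i ((Polynomial.monomial m a : Polynomial ℝ) : ℝ⟦X⟧)
          = if i = m then a else 0 := by
        intro i
        rw [Polynomial.coeff_coe, Polynomial.coeff_monomial]
        simp only [eq_comm]
      simp only [hcoe]
      rw [Polynomial.aeval_monomial]
      by_cases hm : m ≤ n
      · rw [Finset.sum_eq_single m]
        · have halg : (algebraMap ℝ ℝ⟦X⟧) a = C (R := ℝ) a := rfl
          simp [halg, coeff_C_mul]
        · intro b _ hb; simp [hb]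
        · intro hmem; exact absurd (Finset.mem_range.mpr (Nat.lt_succ_of_le hm)) hmem
      · push_neg at hm
        rw [Finset.sum_eq_zero]
        · have halg : (algebraMap ℝ ℝ⟦X⟧) a = C (R := ℝ) a := rfl
          rw [halg, coeff_C_mul, coeff_pow_eq_zero hg hm, mul_zero]
        · intro b hb
          rw [if_neg]
          · ring
          · rintro rfl; exact absurd (Finset.mem_range.mp hb) (by omega)

lemma sub_mul {g : ℝ⟦X⟧} (hg : constantCoeff (R := ℝ) g = 0) (F G : ℝ⟦X⟧) :
    sub (F * G) g = sub F g * sub G g := by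
  ext n
  set P := trunc (n+1) F with hP
  set Q := trunc (n+1) G with hQ
  have hcP : ∀ i ≤ n, coeff (R := ℝ) i F = coeff (R := ℝ) i (P : ℝ⟦X⟧) := by
    intro i hi
    rw [Polynomial.coeff_coe, hP, coeff_trunc, if_pos (Nat.lt_succ_of_le hi)]
  have hcQ : ∀ i ≤ n, coeff (R := ℝ) i G = coeff (R := ℝ) i (Q : ℝ⟦X⟧) := by
    intro i hi
    rw [Polynomial.coeff_coe, hQ, coeff_trunc, if_pos (Nat.lt_succ_of_le hi)]
  have hcPQ : ∀ i ≤ n, coeff (R := ℝ) i (F * G) = coeff (R := ℝ) i ((P : ℝ⟦X⟧) * (Q : ℝ⟦X⟧)) := by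
    intro i hi
    rw [coeff_mul, coeff_mul]
    refine Finset.sum_congr rfl fun x hx => ?_
    have hx' := Finset.HasAntidiagonal.mem_antidiagonal.mp hx
    rw [hcP x.1 (by omega), hcQ x.2 (by omega)]
  have h1 : coeff (R := ℝ) n (sub (F * G) g) = coeff (R := ℝ) n (sub ((P * Q : Polynomial ℝ) : ℝ⟦X⟧) g) := by
    apply coeff_sub_congr
    intro i hi
    rw [hcPQ i hi, Polynomial.coe_mul]
  rw [h1, sub_poly hg, map_mul]
  rw [coeff_mul, coeff_mul]
  refine Finset.sum_congr rfl fun x hx => ?_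
  have hx' := Finset.HasAntidiagonal.mem_antidiagonal.mp hx
  have e1 : coeff (R := ℝ) x.1 (sub F g) = coeff (R := ℝ) x.1 (Polynomial.aeval g P) := by
    rw [← sub_poly hg P]
    exact coeff_sub_congr g fun i hi => hcP i (by omega)
  have e2 : coeff (R := ℝ) x.2 (sub G g) = coeff (R := ℝ) x.2 (Polynomial.aeval g Q) := by
    rw [← sub_poly hg Q]
    exact coeff_sub_congr g fun i hi => hcQ i (by omega)
  rw [e1, e2]


lemma sub_one {g : ℝ⟦X⟧} (hg : constantCoeff (R := ℝ) g = 0) : sub 1 g = 1 := by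
  rw [← Polynomial.coe_one, sub_poly hg, map_one, Polynomial.coe_one]

lemma sub_pow {g : ℝ⟦X⟧} (hg : constantCoeff (R := ℝ) g = 0) (F : ℝ⟦X⟧) (k : ℕ) :
    sub (F ^ k) g = (sub F g) ^ k := by
  induction k with
  | zero => simpa using sub_one hg
  | succ k ih => rw [pow_succ, pow_succ, sub_mul hg, ih]

lemma sub_prod {g : ℝ⟦X⟧} (hg : constantCoeff (R := ℝ) g = 0) {ι : Type*} (s : Finset ι)
    (f : ι → ℝ⟦X⟧) : sub (∏ i ∈ s, f i) g = ∏ i ∈ s, sub (f i) g := by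
  classical
  induction s using Finset.induction_on with
  | empty => simpa using sub_one hg
  | insert a s h ih => rw [Finset.prod_insert h, Finset.prod_insert h, sub_mul hg, ih]

lemma sub_X_add_C {g : ℝ⟦X⟧} (hg : constantCoeff (R := ℝ) g = 0) (a : ℝ) :
    sub (X + C (R := ℝ) a) g = g + C (R := ℝ) a := by
  have : ((Polynomial.X + Polynomial.C a : Polynomial ℝ) : ℝ⟦X⟧) = X + C (R := ℝ) a := by
    push_cast; ring
  have halg : (algebraMap ℝ ℝ⟦X⟧) a = C (R := ℝ) a := rfl
  rw [← this, sub_poly hg, map_add, Polynomial.aeval_X, Polynomial.aeval_C, halg]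

lemma sub_mk (t : ℕ → ℝ) (g : ℝ⟦X⟧) : sub (mk t) g = substSeries t g := by
  ext n
  rw [coeff_sub']
  simp [substSeries]

lemma constantCoeff_sub (F : ℝ⟦X⟧) (g : ℝ⟦X⟧) :
    constantCoeff (R := ℝ) (sub F g) = constantCoeff (R := ℝ) F := by
  rw [← coeff_zero_eq_constantCoeff_apply, ← coeff_zero_eq_constantCoeff_apply F, coeff_sub']
  simp

end LagAux

namespace LagAux
open PowerSeries

lemma lagrange {F φ : ℝ⟦X⟧} (hφ0 : constantCoeff (R := ℝ) φ = 0)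
    (hφ : φ = X * sub F φ) {n : ℕ} (hn : 1 ≤ n) :
    (n : ℝ) * coeff (R := ℝ) n φ = coeff (R := ℝ) (n-1) (F ^ n) := by
  by_cases hF0 : constantCoeff (R := ℝ) F = 0
  · have hzero : ∀ k, coeff (R := ℝ) k φ = 0 := by
      intro k
      induction k using Nat.strong_induction_on with
      | _ k ih =>
        match k with
        | 0 => simpa [coeff_zero_eq_constantCoeff_apply] using hφ0
        | (j+1) =>
          rw [hφ, coeff_succ_X_mul, coeff_sub']
          refine Finset.sum_eq_zero fun i hi => ?_
          match i with
          | 0 =>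
            by_cases hj : j = 0
            · subst hj
              have h00 : coeff (R := ℝ) 0 F = 0 := by
                rw [coeff_zero_eq_constantCoeff_apply]; exact hF0
              simp [h00]
            · simp [PowerSeries.coeff_one, hj]
          | (i'+1) =>
            rw [pow_succ', coeff_mul, Finset.sum_eq_zero, mul_zero]
            intro x hx
            have hx' := Finset.HasAntidiagonal.mem_antidiagonal.mp hx
            rw [ih x.1 (by omega), zero_mul]
    rw [hzero n, mul_zero]
    have hd : (X : ℝ⟦X⟧)^n ∣ F^n := pow_dvd_pow_of_dvd (X_dvd_iff.mpr hF0) n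
    rw [X_pow_dvd_iff.mp hd (n-1) (by omega)]
  · set Q := sub F φ with hQdef
    have hQ0 : constantCoeff (R := ℝ) Q = constantCoeff (R := ℝ) F := constantCoeff_sub F φ
    have hQne : constantCoeff (R := ℝ) Q ≠ 0 := by rw [hQ0]; exact hF0
    have hQI : Q * Q⁻¹ = 1 := PowerSeries.mul_inv_cancel Q hQne
    set c : ℕ → ℝ := fun m => coeff (R := ℝ) m (F ^ n) with hc
    have hQn : Q ^ n = sub (F ^ n) φ := (sub_pow hφ0 F n).symm
    set A : ℝ⟦X⟧ := ∑ m ∈ Finset.range n, C (R := ℝ) (c m) * φ ^ m with hA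
    have hBzero : ∀ j, j < n → coeff (R := ℝ) j (Q ^ n - A) = 0 := by
      intro j hj
      rw [map_sub, hQn, coeff_sub']
      have hA' : coeff (R := ℝ) j A = ∑ m ∈ Finset.range n, c m * coeff (R := ℝ) j (φ ^ m) := by
        rw [hA, map_sum]
        exact Finset.sum_congr rfl fun m _ => coeff_C_mul ..
      rw [hA']
      have heq2 : (∑ i ∈ Finset.range (j+1), coeff (R := ℝ) i (F^n) * coeff (R := ℝ) j (φ ^ i))
           = ∑ m ∈ Finset.range n, c m * coeff (R := ℝ) j (φ ^ m) := by
        apply Finset.sum_subset (Finset.range_subset_range.mpr (by omega))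
        intro x _ hx
        have hxj : j < x := by
          by_contra hcon
          exact hx (Finset.mem_range.mpr (by omega))
        rw [coeff_pow_eq_zero hφ0 hxj, mul_zero]
      rw [heq2, sub_self]
    obtain ⟨Cs, hCs⟩ : (X : ℝ⟦X⟧)^n ∣ Q^n - A := X_pow_dvd_iff.mpr hBzero
    have hQnA : Q ^ n = A + X ^ n * Cs := by rw [← hCs]; ring
    have hkey : d⁄dX ℝ φ = A * (d⁄dX ℝ φ * (Q⁻¹) ^ n)
        + X ^ n * (Cs * (d⁄dX ℝ φ * (Q⁻¹) ^ n)) := by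
      have h1 : (Q * Q⁻¹) ^ n = 1 := by rw [hQI, one_pow]
      calc d⁄dX ℝ φ = d⁄dX ℝ φ * ((Q * Q⁻¹) ^ n) := by rw [h1, mul_one]
        _ = (Q ^ n) * (d⁄dX ℝ φ * (Q⁻¹)^n) := by rw [mul_pow]; ring
        _ = (A + X^n * Cs) * (d⁄dX ℝ φ * (Q⁻¹)^n) := by rw [hQnA]
        _ = _ := by ring
    have hderiv : d⁄dX ℝ φ = Q + X * d⁄dX ℝ Q := by
      nth_rewrite 1 [hφ]
      rw [Derivation.leibniz]
      simp only [derivative_X, smul_eq_mul, mul_one]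
      ring
    have hr : ∀ j : ℕ, 1 ≤ j → coeff (R := ℝ) (j-1) (d⁄dX ℝ φ * (Q⁻¹) ^ j)
        = if j = 1 then 1 else 0 := by
      intro j hj
      match j, hj with
      | 1, _ =>
        rw [if_pos rfl, pow_one]
        have h0 : coeff (R := ℝ) 0 (d⁄dX ℝ φ * Q⁻¹)
            = constantCoeff (R := ℝ) (d⁄dX ℝ φ) * constantCoeff (R := ℝ) (Q⁻¹) := by
          rw [coeff_zero_eq_constantCoeff_apply, map_mul]
        have h1 : constantCoeff (R := ℝ) (d⁄dX ℝ φ) = coeff (R := ℝ) 1 φ := by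
          rw [← coeff_zero_eq_constantCoeff_apply, coeff_derivative]
          simp
        have h2 : coeff (R := ℝ) 1 φ = constantCoeff (R := ℝ) Q := by
          nth_rewrite 1 [hφ]
          rw [show (1:ℕ) = 0 + 1 from rfl, coeff_succ_X_mul,
            coeff_zero_eq_constantCoeff_apply]
        simp only [Nat.sub_self] at *
        rw [h0, h1, h2, PowerSeries.constantCoeff_inv, mul_inv_cancel₀ hQne]
      | (j'+2), _ =>
        set V : ℝ⟦X⟧ := (Q⁻¹) ^ (j'+1) with hV
        have hsplit : d⁄dX ℝ φ * (Q⁻¹)^(j'+2) = V + X * (d⁄dX ℝ Q * Q⁻¹ * V) := by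
          rw [hderiv, pow_succ]
          calc (Q + X * d⁄dX ℝ Q) * ((Q⁻¹)^(j'+1) * Q⁻¹)
              = (Q * Q⁻¹) * V + X * (d⁄dX ℝ Q * Q⁻¹ * V) := by ring
            _ = V + X * (d⁄dX ℝ Q * Q⁻¹ * V) := by rw [hQI, one_mul]
        have hdV : d⁄dX ℝ V = (-(j'+1 : ℝ)) • (d⁄dX ℝ Q * Q⁻¹ * V) := by
          rw [hV, Derivation.leibniz_pow, PowerSeries.derivative_inv']
          rw [smul_eq_C_mul, map_neg, map_add, map_one, map_natCast]
          simp only [smul_eq_mul, nsmul_eq_mul]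
          push_cast
          ring
        have e1 : coeff (R := ℝ) ((j'+2)-1) (d⁄dX ℝ φ * (Q⁻¹)^(j'+2))
            = coeff (R := ℝ) (j'+1) V + coeff (R := ℝ) j' (d⁄dX ℝ Q * Q⁻¹ * V) := by
          rw [hsplit, map_add]
          congr 1
          exact coeff_succ_X_mul ..
        have e2 : coeff (R := ℝ) j' (d⁄dX ℝ Q * Q⁻¹ * V)
            = (-(1/(j'+1:ℝ))) * coeff (R := ℝ) j' (d⁄dX ℝ V) := by
          rw [hdV]
          simp only [map_smul, smul_eq_mul]
          have hne : (j' + 1 : ℝ) ≠ 0 := by positivity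
          field_simp
        have e3 : coeff (R := ℝ) j' (d⁄dX ℝ V) = coeff (R := ℝ) (j'+1) V * (j'+1) := coeff_derivative ..
        rw [e1, e2, e3, if_neg (by omega)]
        have hne : (j' + 1 : ℝ) ≠ 0 := by positivity
        push_cast
        field_simp
        ring
    have hmain := congrArg (coeff (R := ℝ) (n-1)) hkey
    rw [map_add] at hmain
    have hz : coeff (R := ℝ) (n-1) (X^n * (Cs * (d⁄dX ℝ φ * (Q⁻¹)^n))) = 0 := by
      rw [coeff_X_pow_mul', if_neg (by omega)]
    have hA2 : coeff (R := ℝ) (n-1) (A * (d⁄dX ℝ φ * (Q⁻¹)^n)) = c (n-1) := by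
      rw [hA, Finset.sum_mul, map_sum]
      have hterm : ∀ m ∈ Finset.range n,
          coeff (R := ℝ) (n-1) (C (R := ℝ) (c m) * φ^m * (d⁄dX ℝ φ * (Q⁻¹)^n))
          = c m * (if n - m = 1 then 1 else 0) := by
        intro m hm
        have hmn : m < n := Finset.mem_range.mp hm
        have hphim : φ ^ m = X ^ m * Q ^ m := by
          nth_rewrite 1 [hφ]
          rw [mul_pow]
        have hsplitpow : (Q⁻¹ : ℝ⟦X⟧) ^ n = (Q⁻¹)^m * (Q⁻¹)^(n-m) := by
          rw [← pow_add]
          congr 1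
          omega
        have hre : C (R := ℝ) (c m) * φ^m * (d⁄dX ℝ φ * (Q⁻¹)^n)
            = C (R := ℝ) (c m) * (X^m * ((Q*Q⁻¹)^m * (d⁄dX ℝ φ * (Q⁻¹)^(n-m)))) := by
          rw [hphim, hsplitpow, mul_pow]
          ring
        rw [hre, hQI, one_pow, one_mul, coeff_C_mul, coeff_X_pow_mul', if_pos (by omega)]
        have hidx : n - 1 - m = (n - m) - 1 := by omega
        rw [hidx, hr (n-m) (by omega)]
      rw [Finset.sum_congr rfl hterm]
      rw [Finset.sum_eq_single (n-1)]
      · rw [if_pos (by omega), mul_one]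
      · intro b hb hbne
        rw [if_neg (by have := Finset.mem_range.mp hb; omega), mul_zero]
      · intro hnot
        exact absurd (Finset.mem_range.mpr (by omega)) hnot
    rw [hz, hA2, add_zero] at hmain
    rw [coeff_derivative] at hmain
    rw [Nat.cast_sub hn] at hmain
    have hnn : n - 1 + 1 = n := by omega
    rw [hnn] at hmain
    have hcc : coeff (R := ℝ) (n-1) (F^n) = c (n-1) := rfl
    rw [hcc, ← hmain]
    push_cast
    ring

end LagAux

namespace LagAux
open PowerSeries

lemma coeff_prod_tuple {N : ℕ} (f : Fin N → ℝ⟦X⟧) (n : ℕ) :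
    coeff (R := ℝ) n (∏ i, f i)
      = ∑ l ∈ Finset.Nat.antidiagonalTuple N n, ∏ i, coeff (R := ℝ) (l i) (f i) := by
  rw [PowerSeries.coeff_prod]
  refine Finset.sum_nbij' (fun l => ⇑l) (fun v => Finsupp.equivFunOnFinite.symm v)
    ?_ ?_ ?_ ?_ ?_
  · intro l hl
    rw [Finset.Nat.mem_antidiagonalTuple]
    exact (Finset.mem_finsuppAntidiag.mp hl).1
  · intro v hv
    rw [Finset.mem_finsuppAntidiag]
    refine ⟨?_, Finset.subset_univ _⟩
    rw [Finset.Nat.mem_antidiagonalTuple] at hv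
    rw [← hv]
    apply Finset.sum_congr rfl
    intro i _
    simp
  · intro l _
    exact Finsupp.equivFunOnFinite.symm_apply_apply l
  · intro v _
    exact Finsupp.equivFunOnFinite.apply_symm_apply v
  · intro l _
    rfl

lemma coeff_pow_tuple (g : ℝ⟦X⟧) (k n : ℕ) :
    coeff (R := ℝ) n (g ^ k)
      = ∑ l ∈ Finset.Nat.antidiagonalTuple k n, ∏ i, coeff (R := ℝ) (l i) g := by
  rw [← coeff_prod_tuple (fun _ : Fin k => g)]
  congr 1
  rw [Finset.prod_const, Finset.card_univ, Fintype.card_fin]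

lemma coeff_X_add_C_pow (a : ℝ) (k w : ℕ) :
    coeff (R := ℝ) w ((X + C (R := ℝ) a) ^ k) = (k.choose w : ℝ) * a ^ (k - w) := by
  rw [add_pow, map_sum]
  have hterm : ∀ m ∈ Finset.range (k+1),
      coeff (R := ℝ) w ((X:ℝ⟦X⟧)^m * (C (R := ℝ) a)^(k-m) * (k.choose m : ℝ⟦X⟧))
        = (if w = m then (k.choose m : ℝ) * a ^ (k - m) else 0) := by
    intro m _
    have hre : ((X:ℝ⟦X⟧)^m * (C (R := ℝ) a)^(k-m) * (k.choose m : ℝ⟦X⟧))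
        = C (R := ℝ) ((k.choose m : ℝ) * a ^ (k - m)) * X ^ m := by
      rw [← map_pow, show ((k.choose m : ℝ⟦X⟧)) = C (R := ℝ) (k.choose m : ℝ) from
        (map_natCast (C (R := ℝ)) _).symm, map_mul]
      ring
    rw [hre, coeff_C_mul, coeff_X_pow]
    split <;> simp
  rw [Finset.sum_congr rfl hterm]
  by_cases hw : w ≤ k
  · rw [Finset.sum_ite_eq (Finset.range (k+1)) w
      (fun m => (k.choose m : ℝ) * a ^ (k - m)), if_pos (Finset.mem_range.mpr (by omega))]
  · rw [Finset.sum_eq_zero, Nat.choose_eq_zero_of_lt (by omega), Nat.cast_zero, zero_mul]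
    intro m hm
    rw [if_neg]
    have := Finset.mem_range.mp hm
    omega

lemma sum_choose_flip {N : ℕ} (d : Fin N → ℝ) (k u : ℕ) (hu : u ≤ N * k) :
    ∑ w ∈ Finset.Nat.antidiagonalTuple N u, ∏ i, (k.choose (w i) : ℝ) * d i ^ (k - w i)
    = ∑ j ∈ Finset.Nat.antidiagonalTuple N (N*k - u),
        ∏ i, (k.choose (j i) : ℝ) * d i ^ (j i) := by
  classical
  have hsplit1 := Finset.sum_filter_add_sum_filter_not
    (Finset.Nat.antidiagonalTuple N u) (fun w => ∀ i, w i ≤ k)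
    (fun w => ∏ i, (k.choose (w i) : ℝ) * d i ^ (k - w i))
  have hsplit2 := Finset.sum_filter_add_sum_filter_not
    (Finset.Nat.antidiagonalTuple N (N*k - u)) (fun w => ∀ i, w i ≤ k)
    (fun j => ∏ i, (k.choose (j i) : ℝ) * d i ^ (j i))
  have hz1 : (∑ w ∈ (Finset.Nat.antidiagonalTuple N u).filter
      (fun w => ¬ ∀ i, w i ≤ k), ∏ i, (k.choose (w i) : ℝ) * d i ^ (k - w i)) = 0 := by
    apply Finset.sum_eq_zero
    intro w hw
    obtain ⟨i, hi⟩ := not_forall.mp (Finset.mem_filter.mp hw).2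
    apply Finset.prod_eq_zero (Finset.mem_univ i)
    rw [Nat.choose_eq_zero_of_lt (by omega), Nat.cast_zero, zero_mul]
  have hz2 : (∑ j ∈ (Finset.Nat.antidiagonalTuple N (N*k - u)).filter
      (fun w => ¬ ∀ i, w i ≤ k), ∏ i, (k.choose (j i) : ℝ) * d i ^ (j i)) = 0 := by
    apply Finset.sum_eq_zero
    intro w hw
    obtain ⟨i, hi⟩ := not_forall.mp (Finset.mem_filter.mp hw).2
    apply Finset.prod_eq_zero (Finset.mem_univ i)
    rw [Nat.choose_eq_zero_of_lt (by omega), Nat.cast_zero, zero_mul]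
  rw [← hsplit1, ← hsplit2, hz1, hz2, add_zero, add_zero]
  refine Finset.sum_nbij' (fun w i => k - w i) (fun j i => k - j i) ?_ ?_ ?_ ?_ ?_
  · intro w hw
    obtain ⟨hmem, hle⟩ := Finset.mem_filter.mp hw
    rw [Finset.Nat.mem_antidiagonalTuple] at hmem
    rw [Finset.mem_filter, Finset.Nat.mem_antidiagonalTuple]
    refine ⟨?_, fun i => Nat.sub_le _ _⟩
    have hsum : ∑ i : Fin N, (k - w i) = ∑ i : Fin N, k - ∑ i : Fin N, w i :=
      Finset.sum_tsub_distrib Finset.univ (fun i _ => hle i)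
    have hcard : ∑ _i : Fin N, k = N * k := by
      rw [Finset.sum_const, Finset.card_univ, Fintype.card_fin, smul_eq_mul]
    rw [hsum, hcard, hmem]
  · intro j hj
    obtain ⟨hmem, hle⟩ := Finset.mem_filter.mp hj
    rw [Finset.Nat.mem_antidiagonalTuple] at hmem
    rw [Finset.mem_filter, Finset.Nat.mem_antidiagonalTuple]
    refine ⟨?_, fun i => Nat.sub_le _ _⟩
    have hsum : ∑ i : Fin N, (k - j i) = ∑ i : Fin N, k - ∑ i : Fin N, j i :=
      Finset.sum_tsub_distrib Finset.univ (fun i _ => hle i)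
    have hcard : ∑ _i : Fin N, k = N * k := by
      rw [Finset.sum_const, Finset.card_univ, Fintype.card_fin, smul_eq_mul]
    rw [hsum, hcard, hmem]
    omega
  · intro w hw
    obtain ⟨-, hle⟩ := Finset.mem_filter.mp hw
    funext i
    simp only
    have := hle i
    omega
  · intro j hj
    obtain ⟨-, hle⟩ := Finset.mem_filter.mp hj
    funext i
    simp only
    have := hle i
    omega
  · intro w hw
    obtain ⟨-, hle⟩ := Finset.mem_filter.mp hw
    apply Finset.prod_congr rfl
    intro i _
    show (k.choose (w i) : ℝ) * d i ^ (k - w i) = (k.choose (k - w i) : ℝ) * d i ^ (k - w i)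
    rw [Nat.choose_symm (hle i)]

end LagAux

/-- Theorem 5.1. If `ψ` has zero constant term and satisfies
`d₁ψ = z·(d₁ψ+d₁)⋯(d₁ψ+d_{p+1})·T(d₁ψ)` where `T(X) = Σ tᵢ Xⁱ`, then each coefficient
`m_k` of `ψ` satisfies `d₁·m_k = Σ_{r=1}^k P_{k,r}(d₁,…,d_{p+1})·T_{k,r}`, with
`P_{k,r}` the generalized multivariate Fuss–Narayana polynomials and
`T_{k,r} = Σ_{i₁+⋯+i_k = r−1} t_{i₁}⋯t_{i_k}`. -/
theorem statement2 (p : ℕ) (hp : 1 ≤ p) (d : Fin (p+1) → ℝ) (hd : d 0 ≠ 0)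
    (t : ℕ → ℝ) (ψ : PowerSeries ℝ) (hψ0 : PowerSeries.constantCoeff (R := ℝ) ψ = 0)
    (heq : PowerSeries.C (R := ℝ) (d 0) * ψ =
      PowerSeries.X *
        (∏ i : Fin (p+1), (PowerSeries.C (R := ℝ) (d 0) * ψ + PowerSeries.C (R := ℝ) (d i))) *
        substSeries t (PowerSeries.C (R := ℝ) (d 0) * ψ)) :
    ∀ k : ℕ, 1 ≤ k →
      d 0 * PowerSeries.coeff (R := ℝ) k ψ =
        ∑ r ∈ Finset.Icc 1 k,
          (∑ j ∈ Finset.Nat.antidiagonalTuple (p+1) (k*p + r),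
            (1 / (k : ℝ)) * ∏ i : Fin (p+1), ((Nat.choose k (j i) : ℝ) * (d i) ^ (j i))) *
          (∑ i ∈ Finset.Nat.antidiagonalTuple k (r-1), ∏ m : Fin k, t (i m)) := by
  intro k hk
  set φ : PowerSeries ℝ := PowerSeries.C (R := ℝ) (d 0) * ψ with hφdef
  have hφ0 : PowerSeries.constantCoeff (R := ℝ) φ = 0 := by
    rw [hφdef, map_mul, hψ0, mul_zero]
  set F : PowerSeries ℝ :=
    (∏ i : Fin (p+1), (PowerSeries.X + PowerSeries.C (R := ℝ) (d i))) * PowerSeries.mk t with hF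
  have hsub : LagAux.sub F φ =
      (∏ i : Fin (p+1), (φ + PowerSeries.C (R := ℝ) (d i))) * substSeries t φ := by
    rw [hF, LagAux.sub_mul hφ0, LagAux.sub_prod hφ0, LagAux.sub_mk]
    congr 1
    exact Finset.prod_congr rfl fun i _ => LagAux.sub_X_add_C hφ0 (d i)
  have hφeq : φ = PowerSeries.X * LagAux.sub F φ := by
    rw [hsub, ← mul_assoc]
    exact heq
  have hlag := LagAux.lagrange hφ0 hφeq hk
  have hcoeff : PowerSeries.coeff (R := ℝ) k φ = d 0 * PowerSeries.coeff (R := ℝ) k ψ :=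
    PowerSeries.coeff_C_mul ..
  have hexp : PowerSeries.coeff (R := ℝ) (k-1) (F ^ k) =
      ∑ r ∈ Finset.Icc 1 k,
        (∑ j ∈ Finset.Nat.antidiagonalTuple (p+1) (k*p + r),
          ∏ i : Fin (p+1), ((Nat.choose k (j i) : ℝ) * (d i) ^ (j i))) *
        (∑ i ∈ Finset.Nat.antidiagonalTuple k (r-1), ∏ m : Fin k, t (i m)) := by
    rw [hF, mul_pow, ← Finset.prod_pow, PowerSeries.coeff_mul]
    refine Finset.sum_nbij' (fun x => x.2 + 1) (fun r => (k - r, r - 1)) ?_ ?_ ?_ ?_ ?_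
    · intro x hx
      have hx' := Finset.HasAntidiagonal.mem_antidiagonal.mp hx
      rw [Finset.mem_Icc]
      omega
    · intro r hr
      have hr' := Finset.mem_Icc.mp hr
      rw [Finset.HasAntidiagonal.mem_antidiagonal]
      show k - r + (r - 1) = k - 1
      omega
    · intro x hx
      have hx' := Finset.HasAntidiagonal.mem_antidiagonal.mp hx
      have h1 : k - (x.2 + 1) = x.1 := by omega
      have h2 : x.2 + 1 - 1 = x.2 := by omega
      show (k - (x.2 + 1), x.2 + 1 - 1) = x
      rw [h1, h2]
    · intro r hr
      have hr' := Finset.mem_Icc.mp hr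
      show r - 1 + 1 = r
      omega
    · intro x hx
      have hx' := Finset.HasAntidiagonal.mem_antidiagonal.mp hx
      congr 1
      · rw [LagAux.coeff_prod_tuple]
        have hstep : ∀ w ∈ Finset.Nat.antidiagonalTuple (p+1) x.1,
            (∏ i : Fin (p+1),
              PowerSeries.coeff (R := ℝ) (w i) ((PowerSeries.X + PowerSeries.C (R := ℝ) (d i)) ^ k))
            = ∏ i : Fin (p+1), (k.choose (w i) : ℝ) * (d i) ^ (k - w i) := by
          intro w _
          exact Finset.prod_congr rfl fun i _ => LagAux.coeff_X_add_C_pow (d i) k (w i)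
        rw [Finset.sum_congr rfl hstep,
          LagAux.sum_choose_flip d k x.1 (by
            have hle := Nat.le_mul_of_pos_left k (show 0 < p + 1 by omega)
            omega)]
        have hidx : (p+1) * k - x.1 = k * p + (x.2 + 1) := by
          have hmul : (p+1) * k = k * p + k := by ring
          omega
        rw [hidx]
      · rw [LagAux.coeff_pow_tuple]
        have h2 : x.2 + 1 - 1 = x.2 := by omega
        rw [h2]
        refine Finset.sum_congr rfl fun l _ => Finset.prod_congr rfl fun m _ => ?_
        rw [PowerSeries.coeff_mk]
  have hk0 : (k:ℝ) ≠ 0 := Nat.cast_ne_zero.mpr (by omega)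
  have hfinal : d 0 * PowerSeries.coeff (R := ℝ) k ψ
      = (1/(k:ℝ)) * PowerSeries.coeff (R := ℝ) (k-1) (F^k) := by
    rw [← hlag, hcoeff]
    field_simp
  rw [hfinal, hexp, Finset.mul_sum]
  refine Finset.sum_congr rfl fun r _ => ?_
  rw [← Finset.mul_sum]
  ring
end
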